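/- arXiv:1711.00697 — 3 statements merged into one kernel-verified Lean document; each statement's English description precedes it below -/
import Mathlib

section
/- Let N : L(A) → L(B) be a CPTP map and N̂ : L(A) → L(B) a completely positive map between finite-dimensional complex Hilbert spaces, and let 0 < ε < 1. Assume that for every density operator ρ on A one has −ε(N(ρ) + 1_B/|B|) ≤ N̂(ρ) − N(ρ) ≤ ε(N(ρ) + 1_B/|B|) in the Loewner order. Then for every p ∈ [1,∞] and every density operator ρ on A, ‖N̂(ρ) − N(ρ)‖_p ≤ ε(‖N(ρ)‖_p + 1/|B|^{1−1/p}). -/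
open scoped Kronecker ENNReal ComplexOrder
open Matrix MeasureTheory

noncomputable section
attribute [local instance] Classical.propDecidable

/-- The singular values of a square complex matrix. -/
def singularValues {m : Type*} [Fintype m] [DecidableEq m] (X : Matrix m m ℂ) : m → ℝ :=
  fun i => Real.sqrt ((Matrix.posSemidef_conjTranspose_mul_self X).1.eigenvalues i)

/-- The Schatten `p`-norm of a square complex matrix (`p = ⊤` giving the operator norm). -/
def schattenNorm {m : Type*} [Fintype m] [DecidableEq m] (p : ℝ≥0∞) (X : Matrix m m ℂ) : ℝ :=
  if p = ⊤ then ⨆ i, singularValues X i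
  else (∑ i, singularValues X i ^ p.toReal) ^ (1 / p.toReal)

/-- `Φ` has the Kraus decomposition given by the family `K`. -/
def HasKraus {a b : Type*} [Fintype a] [Fintype b] {s : ℕ}
    (Φ : Matrix a a ℂ → Matrix b b ℂ) (K : Fin s → Matrix b a ℂ) : Prop :=
  ∀ X, Φ X = ∑ i, K i * X * (K i)ᴴ

/-- Completely positive map: admits some Kraus decomposition. -/
def IsCP {a b : Type*} [Fintype a] [Fintype b]
    (Φ : Matrix a a ℂ → Matrix b b ℂ) : Prop :=
  ∃ (s : ℕ) (K : Fin s → Matrix b a ℂ), HasKraus Φ K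

/-- Trace preserving map. -/
def IsTP {a b : Type*} [Fintype a] [Fintype b]
    (Φ : Matrix a a ℂ → Matrix b b ℂ) : Prop :=
  ∀ X, (Φ X).trace = X.trace

/-- Completely positive and trace preserving map. -/
def IsCPTP {a b : Type*} [Fintype a] [Fintype b]
    (Φ : Matrix a a ℂ → Matrix b b ℂ) : Prop :=
  IsCP Φ ∧ IsTP Φ

/-- The Kraus rank: minimal number of Kraus operators. -/
def krausRank {a b : Type*} [Fintype a] [Fintype b]
    (Φ : Matrix a a ℂ → Matrix b b ℂ) : ℕ :=
  sInf {s : ℕ | ∃ K : Fin s → Matrix b a ℂ, HasKraus Φ K}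

/-- A density operator: positive semidefinite with trace one. -/
def IsDensity {a : Type*} [Fintype a] [DecidableEq a] (ρ : Matrix a a ℂ) : Prop :=
  ρ.PosSemidef ∧ ρ.trace = 1

/-- Loewner order. -/
def loewnerLE {a : Type*} [Fintype a] (X Y : Matrix a a ℂ) : Prop :=
  (Y - X).PosSemidef

/-- von Neumann entropy. -/
def vonNeumannEntropy {a : Type*} [Fintype a] [DecidableEq a] (ρ : Matrix a a ℂ) : ℝ :=
  if h : ρ.IsHermitian then -∑ i, h.eigenvalues i * Real.log (h.eigenvalues i) else 0

/-- Rényi entropy of order `p ∈ (1,∞]`. -/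
def renyiEntropy {a : Type*} [Fintype a] [DecidableEq a] (p : ℝ≥0∞) (ρ : Matrix a a ℂ) : ℝ :=
  if p = ⊤ then -Real.log (schattenNorm ⊤ ρ)
  else -(p.toReal / (p.toReal - 1)) * Real.log (schattenNorm p ρ)

/-- The factor `p/(p-1)`, read as `1` for `p = ∞`. -/
def pFactor (p : ℝ≥0∞) : ℝ := if p = ⊤ then 1 else p.toReal / (p.toReal - 1)

/-- Square root of a positive semidefinite matrix (junk value otherwise). -/
def psdSqrt {a : Type*} [Fintype a] [DecidableEq a] (ρ : Matrix a a ℂ) : Matrix a a ℂ :=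
  if h : ρ.PosSemidef then
    (h.1.eigenvectorUnitary : Matrix a a ℂ) * diagonal ((↑) ∘ Real.sqrt ∘ h.1.eigenvalues) *
      (star h.1.eigenvectorUnitary : Matrix a a ℂ)
  else 0

/-- Fidelity `F(σ, ω) = ‖√σ √ω‖₁`. -/
def fidelity {a : Type*} [Fintype a] [DecidableEq a] (σ ω : Matrix a a ℂ) : ℝ :=
  schattenNorm 1 (psdSqrt σ * psdSqrt ω)

/-- Rank-one projection `|v⟩⟨v|`. -/
def projVec {a : Type*} (v : a → ℂ) : Matrix a a ℂ :=
  Matrix.of fun i j => v i * star (v j)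

/-- Partial trace over the second tensor factor. -/
def ptraceSnd {b e : Type*} [Fintype e] (M : Matrix (b × e) (b × e) ℂ) : Matrix b b ℂ :=
  Matrix.of fun i j => ∑ k, M (i, k) (j, k)

/-- Partial trace over the first tensor factor. -/
def ptraceFst {b e : Type*} [Fintype b] (M : Matrix (b × e) (b × e) ℂ) : Matrix e e ℂ :=
  Matrix.of fun k l => ∑ i, M (i, k) (i, l)

/-- The channel `ρ ↦ tr_E (V ρ V†)` associated to an isometry `V : A → B ⊗ E`. -/
def stineChan {a b e : Type*} [Fintype a] [Fintype b] [Fintype e]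
    (V : Matrix (b × e) a ℂ) : Matrix a a ℂ → Matrix b b ℂ :=
  fun ρ => ptraceSnd (V * ρ * Vᴴ)

/-- The CP map `N_φ : ρ ↦ |E| tr_E ((1 ⊗ |φ⟩⟨φ|) V ρ V† (1 ⊗ |φ⟩⟨φ|))`. -/
def stineChanPinned {a b e : Type*} [Fintype a] [Fintype b] [Fintype e] [DecidableEq b]
    (V : Matrix (b × e) a ℂ) (φ : e → ℂ) : Matrix a a ℂ → Matrix b b ℂ :=
  fun ρ => (Fintype.card e : ℂ) •
    ptraceSnd (((1 : Matrix b b ℂ) ⊗ₖ projVec φ) * (V * ρ * Vᴴ) * ((1 : Matrix b b ℂ) ⊗ₖ projVec φ))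

/-- `⟨y| M |y⟩`. -/
def qForm {b : Type*} [Fintype b] (y : b → ℂ) (M : Matrix b b ℂ) : ℂ :=
  star y ⬝ᵥ M *ᵥ y

/-- The uniform (Haar, rotation-invariant) probability measure on the unit sphere of `ℂ^s`. -/
def IsUniformOnSphere {s : ℕ} (μ : Measure (Fin s → ℂ)) : Prop :=
  IsProbabilityMeasure μ ∧
  μ {v : Fin s → ℂ | ∑ i, ‖v i‖ ^ 2 = 1}ᶜ = 0 ∧
  ∀ U ∈ Matrix.unitaryGroup (Fin s) ℂ, μ.map (fun v => U *ᵥ v) = μ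


section AuxProofs
open Finset Polynomial

lemma aux_charpoly_diagonal {n : Type*} [Fintype n] [DecidableEq n] (d : n → ℂ) :
    (Matrix.diagonal d).charpoly = ∏ i, (X - C (d i)) := by
  have h : charmatrix (Matrix.diagonal d) = Matrix.diagonal (fun i => (X : ℂ[X]) - C (d i)) := by
    ext i j
    by_cases h : i = j
    · subst h; simp
    · simp [h, charmatrix_apply, Matrix.diagonal_apply_ne _ h]
  rw [Matrix.charpoly, h, Matrix.det_diagonal]

lemma aux_charpoly_conj {n : Type*} [Fintype n] [DecidableEq n]
    {U : Matrix n n ℂ} (hU : U ∈ Matrix.unitaryGroup n ℂ) (A : Matrix n n ℂ) :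
    (U * A * star U).charpoly = A.charpoly := by
  have hUU : U * star U = 1 := (Matrix.mem_unitaryGroup_iff).mp hU
  have h : charmatrix (U * A * star U) =
      (U.map C) * charmatrix A * ((star U).map C) := by
    rw [charmatrix, charmatrix, Matrix.mul_sub, Matrix.sub_mul]
    congr 1
    · have hc : (U.map C) * Matrix.scalar n (X : ℂ[X]) = Matrix.scalar n (X : ℂ[X]) * (U.map C) :=
        (Matrix.scalar_commute (X : ℂ[X]) (fun r => Commute.all _ r) (U.map C)).symm
      rw [hc, Matrix.mul_assoc, ← Matrix.map_mul, hUU]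
      simp
    · show (C : ℂ →+* ℂ[X]).mapMatrix (U * A * star U) = U.map C * (C : ℂ →+* ℂ[X]).mapMatrix A * (star U).map C
      rw [_root_.map_mul, _root_.map_mul]
      rfl
  rw [Matrix.charpoly, h, Matrix.det_mul, Matrix.det_mul, Matrix.charpoly]
  have h1 : U.map C * (star U).map C = 1 := by
    rw [← Matrix.map_mul, hUU]; simp
  have hdet : (U.map C).det * ((star U).map C).det = 1 := by
    rw [← Matrix.det_mul, h1, Matrix.det_one]
  calc (U.map C).det * (charmatrix A).det * ((star U).map C).det
      = (charmatrix A).det * ((U.map C).det * ((star U).map C).det) := by ring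
    _ = (charmatrix A).det := by rw [hdet, mul_one]

lemma aux_charpoly_of_decomp {n : Type*} [Fintype n] [DecidableEq n]
    {A : Matrix n n ℂ} {U : Matrix n n ℂ} (hU : U ∈ Matrix.unitaryGroup n ℂ) (d : n → ℝ)
    (h : A = U * Matrix.diagonal (fun i => (d i : ℂ)) * star U) :
    A.charpoly = ∏ i, (X - C ((d i : ℂ))) := by
  rw [h, aux_charpoly_conj hU, aux_charpoly_diagonal]

lemma aux_eigs_multiset {n : Type*} [Fintype n] [DecidableEq n]
    {A : Matrix n n ℂ} (hA : A.IsHermitian)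
    {U : Matrix n n ℂ} (hU : U ∈ Matrix.unitaryGroup n ℂ) (d : n → ℝ)
    (h : A = U * Matrix.diagonal (fun i => (d i : ℂ)) * star U) :
    Multiset.map hA.eigenvalues Finset.univ.val = Multiset.map d Finset.univ.val := by
  have h1 : A.charpoly = ∏ i, (X - C ((hA.eigenvalues i : ℂ))) := by
    refine aux_charpoly_of_decomp (U := (hA.eigenvectorUnitary : Matrix n n ℂ))
      (hA.eigenvectorUnitary).2 hA.eigenvalues ?_
    have hs := hA.spectral_theorem
    rw [Unitary.conjStarAlgAut_apply] at hs
    exact hs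
  have h2 : A.charpoly = ∏ i, (X - C ((d i : ℂ))) := aux_charpoly_of_decomp hU d h
  have key : ∀ f : n → ℝ, (∏ i, (X - C ((f i : ℂ)))).roots
      = Multiset.map (fun i => ((f i : ℂ))) Finset.univ.val := by
    intro f
    rw [Finset.prod_eq_multiset_prod]
    rw [show Multiset.map (fun i => X - C ((f i : ℂ))) Finset.univ.val
        = Multiset.map (fun a => X - C a) (Multiset.map (fun i => ((f i : ℂ))) Finset.univ.val) by
      rw [Multiset.map_map]; rfl]
    exact roots_multiset_prod_X_sub_C _
  have := congrArg Polynomial.roots (h1.symm.trans h2)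
  rw [key, key] at this
  have h3 : Multiset.map (Complex.ofReal) (Multiset.map hA.eigenvalues Finset.univ.val)
      = Multiset.map (Complex.ofReal) (Multiset.map d Finset.univ.val) := by
    rw [Multiset.map_map, Multiset.map_map]
    exact this
  exact Multiset.map_injective Complex.ofReal_injective h3

lemma aux_sum_comp {n : Type*} [Fintype n] {f g : n → ℝ}
    (h : Multiset.map f Finset.univ.val = Multiset.map g Finset.univ.val) (φ : ℝ → ℝ) :
    ∑ i, φ (f i) = ∑ i, φ (g i) := by
  have h2 := congrArg (fun m => (Multiset.map φ m).sum) h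
  simp only [Multiset.map_map] at h2
  rw [Finset.sum_eq_multiset_sum, Finset.sum_eq_multiset_sum]
  exact h2

lemma aux_image_comp {n : Type*} [Fintype n] [DecidableEq n] {f g : n → ℝ}
    (h : Multiset.map f Finset.univ.val = Multiset.map g Finset.univ.val) :
    Finset.image f Finset.univ = Finset.image g Finset.univ := by
  ext x
  simp only [Finset.mem_image]
  constructor
  · rintro ⟨i, -, rfl⟩
    have : f i ∈ Multiset.map g Finset.univ.val := by
      rw [← h]; exact Multiset.mem_map_of_mem _ (Finset.mem_univ_val i)
    obtain ⟨j, -, hj⟩ := Multiset.mem_map.mp this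
    exact ⟨j, Finset.mem_univ j, hj⟩
  · rintro ⟨i, -, rfl⟩
    have : g i ∈ Multiset.map f Finset.univ.val := by
      rw [h]; exact Multiset.mem_map_of_mem _ (Finset.mem_univ_val i)
    obtain ⟨j, -, hj⟩ := Multiset.mem_map.mp this
    exact ⟨j, Finset.mem_univ j, hj⟩

lemma aux_ciSup_congr {n : Type*} [Fintype n] [DecidableEq n] {f g : n → ℝ}
    (h : Finset.image f Finset.univ = Finset.image g Finset.univ) :
    ⨆ i, f i = ⨆ i, g i := by
  have hr : Set.range f = Set.range g := by
    rw [← Set.image_univ, ← Set.image_univ, ← Finset.coe_univ, ← Finset.coe_image,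
      ← Finset.coe_image, h]
  rw [show (⨆ i, f i) = sSup (Set.range f) from rfl, hr]; rfl

lemma aux_herm_sq {n : Type*} [Fintype n] [DecidableEq n] {Y : Matrix n n ℂ}
    (hY : Y.IsHermitian) :
    Yᴴ * Y = (hY.eigenvectorUnitary : Matrix n n ℂ) *
      Matrix.diagonal (fun i => ((hY.eigenvalues i ^ 2 : ℝ) : ℂ)) *
      star (hY.eigenvectorUnitary : Matrix n n ℂ) := by
  have hUU : star (hY.eigenvectorUnitary : Matrix n n ℂ) * (hY.eigenvectorUnitary : Matrix n n ℂ) = 1 :=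
    Unitary.coe_star_mul_self hY.eigenvectorUnitary
  rw [show Yᴴ = Y from hY]
  conv_lhs => rw [hY.spectral_theorem, Unitary.conjStarAlgAut_apply]
  set U : Matrix n n ℂ := (hY.eigenvectorUnitary : Matrix n n ℂ)
  set D : Matrix n n ℂ := Matrix.diagonal (RCLike.ofReal ∘ hY.eigenvalues) with hD
  have key : (U * D * star U) * (U * D * star U) = U * (D * D) * star U := by
    calc (U * D * star U) * (U * D * star U)
        = U * D * (star U * U) * (D * star U) := by
          simp only [Matrix.mul_assoc]
      _ = U * (D * D) * star U := by rw [hUU]; simp only [Matrix.mul_one, Matrix.mul_assoc, Matrix.one_mul]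
  rw [key]
  congr 1
  rw [Matrix.diagonal_mul_diagonal]
  congr 1
  ext i
  simp [Function.comp]
  ring

lemma aux_sv_multiset {n : Type*} [Fintype n] [DecidableEq n] {Y : Matrix n n ℂ}
    (hY : Y.IsHermitian) :
    Multiset.map (singularValues Y) Finset.univ.val
      = Multiset.map (fun i => |hY.eigenvalues i|) Finset.univ.val := by
  have h := aux_eigs_multiset (Matrix.posSemidef_conjTranspose_mul_self Y).1
    (hY.eigenvectorUnitary).2 (fun i => hY.eigenvalues i ^ 2) (aux_herm_sq hY)
  have h2 := congrArg (Multiset.map Real.sqrt) h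
  rw [Multiset.map_map, Multiset.map_map] at h2
  rw [show Real.sqrt ∘ (fun i => hY.eigenvalues i ^ 2) = (fun i => |hY.eigenvalues i|) from
    funext fun i => Real.sqrt_sq_eq_abs _] at h2
  exact h2

lemma aux_qform_eq_sum {n : Type*} [Fintype n] [DecidableEq n] {A : Matrix n n ℂ}
    (hA : A.IsHermitian) (v : n → ℂ) :
    RCLike.re (star v ⬝ᵥ A *ᵥ v) =
      ∑ j, hA.eigenvalues j *
        Complex.normSq ((star (hA.eigenvectorUnitary : Matrix n n ℂ) *ᵥ v) j) := by
  set V := (hA.eigenvectorUnitary : Matrix n n ℂ) with hV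
  set w := star V *ᵥ v with hw
  have h1 : star v ⬝ᵥ A *ᵥ v
      = star w ⬝ᵥ (Matrix.diagonal (RCLike.ofReal ∘ hA.eigenvalues) *ᵥ w) := by
    conv_lhs => rw [hA.spectral_theorem, Unitary.conjStarAlgAut_apply]
    rw [← Matrix.mulVec_mulVec, ← Matrix.mulVec_mulVec, Matrix.dotProduct_mulVec (star v) V _,
      hw, Matrix.star_mulVec]
    congr 1
    rw [Matrix.star_eq_conjTranspose, Matrix.conjTranspose_conjTranspose]
  rw [h1, dotProduct, map_sum]
  refine Finset.sum_congr rfl fun j _ => ?_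
  simp only [Matrix.mulVec_diagonal, Function.comp_apply, Pi.star_apply, RCLike.star_def]
  have h3 : (starRingEnd ℂ) (w j) * ((RCLike.ofReal (hA.eigenvalues j) : ℂ) * w j)
      = (hA.eigenvalues j : ℂ) * ((Complex.normSq (w j) : ℝ) : ℂ) := by
    have : (RCLike.ofReal (hA.eigenvalues j) : ℂ) = ((hA.eigenvalues j : ℝ) : ℂ) := rfl
    rw [this, show (starRingEnd ℂ) (w j) * (((hA.eigenvalues j : ℝ) : ℂ) * w j)
      = ((hA.eigenvalues j : ℝ) : ℂ) * (w j * (starRingEnd ℂ) (w j)) by ring, Complex.mul_conj]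
  rw [h3, ← Complex.ofReal_mul]
  simp

lemma aux_weights {n : Type*} [Fintype n] [DecidableEq n] {V : Matrix n n ℂ}
    (hV : V ∈ Matrix.unitaryGroup n ℂ) (v : n → ℂ) (hv : star v ⬝ᵥ v = 1) :
    ∑ j, Complex.normSq ((star V *ᵥ v) j) = 1 := by
  set w := star V *ᵥ v with hw
  have h1 : star w ⬝ᵥ w = ∑ j, ((Complex.normSq (w j) : ℝ) : ℂ) := by
    rw [dotProduct]
    refine Finset.sum_congr rfl fun j _ => ?_
    simp only [Pi.star_apply, RCLike.star_def]
    rw [mul_comm, Complex.mul_conj]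
  have hVV : V * Vᴴ = 1 := by
    rw [← Matrix.star_eq_conjTranspose]; exact Matrix.mem_unitaryGroup_iff.mp hV
  have h2 : star w ⬝ᵥ w = 1 := by
    rw [hw, Matrix.star_mulVec, Matrix.star_eq_conjTranspose, Matrix.conjTranspose_conjTranspose,
      ← Matrix.dotProduct_mulVec, Matrix.mulVec_mulVec, hVV, Matrix.one_mulVec, hv]
  rw [h1, ← Complex.ofReal_sum] at h2
  exact_mod_cast h2

lemma aux_unitary_row_sq {n : Type*} [Fintype n] [DecidableEq n] {W : Matrix n n ℂ}
    (hW : W ∈ Matrix.unitaryGroup n ℂ) (j : n) :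
    ∑ i, Complex.normSq (W j i) = 1 := by
  have h2 := congrFun (congrFun (Matrix.mem_unitaryGroup_iff.mp hW) j) j
  rw [Matrix.mul_apply] at h2
  simp only [Matrix.one_apply_eq] at h2
  have h3 : ∑ i, W j i * (star W) i j = ∑ i, ((Complex.normSq (W j i) : ℝ) : ℂ) := by
    refine Finset.sum_congr rfl fun i _ => ?_
    rw [Matrix.star_apply, RCLike.star_def, Complex.mul_conj]
  rw [h3, ← Complex.ofReal_sum] at h2
  exact_mod_cast h2

lemma aux_col_unit {n : Type*} [Fintype n] [DecidableEq n] {U : Matrix n n ℂ}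
    (hU : U ∈ Matrix.unitaryGroup n ℂ) (i : n) :
    star (fun k => U k i) ⬝ᵥ (fun k => U k i) = 1 := by
  have h2 := congrFun (congrFun (Matrix.mem_unitaryGroup_iff'.mp hU) i) i
  rw [Matrix.mul_apply] at h2
  simp only [Matrix.one_apply_eq] at h2
  rw [dotProduct]
  rw [← h2]
  refine Finset.sum_congr rfl fun k _ => ?_
  rw [Matrix.star_apply]
  rfl

lemma aux_jensen {n : Type*} [Fintype n] [DecidableEq n] {A : Matrix n n ℂ}
    (hA : A.PosSemidef) {U : Matrix n n ℂ} (hU : U ∈ Matrix.unitaryGroup n ℂ)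
    {q : ℝ} (hq : 1 ≤ q) :
    ∑ i, (RCLike.re (star (fun k => U k i) ⬝ᵥ A *ᵥ (fun k => U k i))) ^ q
      ≤ ∑ j, hA.1.eigenvalues j ^ q := by
  set V := (hA.1.eigenvectorUnitary : Matrix n n ℂ) with hVdef
  set W := star V * U with hWdef
  have hW : W ∈ Matrix.unitaryGroup n ℂ :=
    Submonoid.mul_mem _ (Unitary.star_mem (hA.1.eigenvectorUnitary).2) hU
  have hcol : ∀ i j, (star V *ᵥ (fun k => U k i)) j = W j i := by
    intro i j
    rw [hWdef, Matrix.mul_apply, Matrix.mulVec, dotProduct]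
  have hkey : ∀ i, RCLike.re (star (fun k => U k i) ⬝ᵥ A *ᵥ (fun k => U k i))
      = ∑ j, hA.1.eigenvalues j * Complex.normSq (W j i) := by
    intro i
    rw [aux_qform_eq_sum hA.1]
    refine Finset.sum_congr rfl fun j _ => ?_
    rw [hcol i j]
  calc ∑ i, (RCLike.re (star (fun k => U k i) ⬝ᵥ A *ᵥ (fun k => U k i))) ^ q
      = ∑ i, (∑ j, Complex.normSq (W j i) * hA.1.eigenvalues j) ^ q := by
        refine Finset.sum_congr rfl fun i _ => ?_
        rw [hkey i]
        congr 1
        exact Finset.sum_congr rfl fun j _ => mul_comm _ _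
    _ ≤ ∑ i, ∑ j, Complex.normSq (W j i) * hA.1.eigenvalues j ^ q := by
        refine Finset.sum_le_sum fun i _ => ?_
        refine Real.rpow_arith_mean_le_arith_mean_rpow Finset.univ
          (fun j => Complex.normSq (W j i)) (fun j => hA.1.eigenvalues j)
          (fun j _ => Complex.normSq_nonneg _) ?_ (fun j _ => hA.eigenvalues_nonneg j) hq
        have h := aux_weights (hA.1.eigenvectorUnitary).2 (fun k => U k i) (aux_col_unit hU i)
        calc ∑ j, Complex.normSq (W j i)
            = ∑ j, Complex.normSq ((star V *ᵥ (fun k => U k i)) j) := by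
              exact Finset.sum_congr rfl fun j _ => by rw [hcol i j]
          _ = 1 := h
    _ = ∑ j, (∑ i, Complex.normSq (W j i)) * hA.1.eigenvalues j ^ q := by
        rw [Finset.sum_comm]
        exact Finset.sum_congr rfl fun j _ => by rw [← Finset.sum_mul]
    _ = ∑ j, hA.1.eigenvalues j ^ q := by
        refine Finset.sum_congr rfl fun j _ => ?_
        rw [aux_unitary_row_sq hW j, one_mul]

lemma aux_qform_le_sup {n : Type*} [Fintype n] [DecidableEq n] [Nonempty n]
    {A : Matrix n n ℂ} (hA : A.PosSemidef) (v : n → ℂ) (hv : star v ⬝ᵥ v = 1) :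
    RCLike.re (star v ⬝ᵥ A *ᵥ v) ≤ ⨆ j, hA.1.eigenvalues j := by
  rw [aux_qform_eq_sum hA.1 v]
  have hw := aux_weights (hA.1.eigenvectorUnitary).2 v hv
  have hbdd : BddAbove (Set.range hA.1.eigenvalues) := Set.Finite.bddAbove (Set.finite_range _)
  calc ∑ j, hA.1.eigenvalues j * Complex.normSq ((star (hA.1.eigenvectorUnitary : Matrix n n ℂ) *ᵥ v) j)
      ≤ ∑ j, (⨆ k, hA.1.eigenvalues k) * Complex.normSq ((star (hA.1.eigenvectorUnitary : Matrix n n ℂ) *ᵥ v) j) := by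
        refine Finset.sum_le_sum fun j _ => ?_
        exact mul_le_mul_of_nonneg_right (le_ciSup hbdd j) (Complex.normSq_nonneg _)
    _ = ⨆ j, hA.1.eigenvalues j := by
        rw [← Finset.mul_sum, hw, mul_one]

lemma aux_abs_eig_le {n : Type*} [Fintype n] [DecidableEq n] {Xm B : Matrix n n ℂ}
    (hX : Xm.IsHermitian) (h1 : (B - Xm).PosSemidef) (h2 : (Xm + B).PosSemidef) (i : n) :
    |hX.eigenvalues i| ≤
      RCLike.re (star ⇑(hX.eigenvectorBasis i) ⬝ᵥ B *ᵥ ⇑(hX.eigenvectorBasis i)) := by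
  set v := (⇑(hX.eigenvectorBasis i) : n → ℂ) with hv
  have hXv : RCLike.re (star v ⬝ᵥ Xm *ᵥ v) = hX.eigenvalues i := (hX.eigenvalues_eq i).symm
  have hsub : RCLike.re (star v ⬝ᵥ (B - Xm) *ᵥ v)
      = RCLike.re (star v ⬝ᵥ B *ᵥ v) - RCLike.re (star v ⬝ᵥ Xm *ᵥ v) := by
    rw [Matrix.sub_mulVec, dotProduct_sub, map_sub]
  have hadd : RCLike.re (star v ⬝ᵥ (Xm + B) *ᵥ v)
      = RCLike.re (star v ⬝ᵥ Xm *ᵥ v) + RCLike.re (star v ⬝ᵥ B *ᵥ v) := by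
    rw [Matrix.add_mulVec, dotProduct_add, map_add]
  have hp1 := h1.re_dotProduct_nonneg v
  have hp2 := h2.re_dotProduct_nonneg v
  rw [hsub, hXv] at hp1
  rw [hadd, hXv] at hp2
  rw [abs_le]
  constructor <;> linarith

lemma aux_qform_smul {n : Type*} [Fintype n] [DecidableEq n] (M : Matrix n n ℂ) (v : n → ℂ)
    (hv : star v ⬝ᵥ v = 1) (ε : ℝ) (b : ℕ) :
    RCLike.re (star v ⬝ᵥ ((ε : ℂ) • (M + ((b : ℂ))⁻¹ • (1 : Matrix n n ℂ))) *ᵥ v)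
      = ε * (RCLike.re (star v ⬝ᵥ M *ᵥ v) + ((b : ℝ))⁻¹) := by
  rw [Matrix.smul_mulVec, Matrix.add_mulVec, Matrix.smul_mulVec, Matrix.one_mulVec,
    dotProduct_smul, dotProduct_add, dotProduct_smul, hv]
  have hc : ((b : ℂ))⁻¹ = (((b : ℝ))⁻¹ : ℂ) := by push_cast; ring
  rw [smul_eq_mul, smul_eq_mul, mul_one, hc]
  simp [Complex.add_re, Complex.ofReal_re]

lemma aux_sum_psd {n : Type*} [Fintype n] {s : ℕ}
    (f : Fin s → Matrix n n ℂ) (h : ∀ i, (f i).PosSemidef) :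
    (∑ i, f i).PosSemidef := by
  refine Finset.sum_induction f Matrix.PosSemidef (fun a b ha hb => ha.add hb)
    Matrix.PosSemidef.zero (fun i _ => h i)

lemma schattenNorm_top' {m : Type*} [Fintype m] [DecidableEq m] (X : Matrix m m ℂ) :
    schattenNorm ⊤ X = ⨆ i, singularValues X i := by rw [schattenNorm, if_pos rfl]

lemma schattenNorm_ne_top' {m : Type*} [Fintype m] [DecidableEq m] {p : ℝ≥0∞} (h : p ≠ ⊤)
    (X : Matrix m m ℂ) :
    schattenNorm p X = (∑ i, singularValues X i ^ p.toReal) ^ (1 / p.toReal) := by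
  rw [schattenNorm, if_neg h]

lemma schattenNorm_nonneg' {m : Type*} [Fintype m] [DecidableEq m] (p : ℝ≥0∞)
    (X : Matrix m m ℂ) : 0 ≤ schattenNorm p X := by
  rw [schattenNorm]
  split_ifs
  · exact Real.iSup_nonneg fun i => Real.sqrt_nonneg _
  · exact Real.rpow_nonneg (Finset.sum_nonneg fun i _ =>
      Real.rpow_nonneg (Real.sqrt_nonneg _) _) _

end AuxProofs

/-- the two-sided Loewner approximation implies Schatten `p`-norm
approximation `‖N̂(ρ) − N(ρ)‖_p ≤ ε (‖N(ρ)‖_p + 1/|B|^{1−1/p})` for all `p ∈ [1,∞]`. -/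
theorem stmt1 (a b : ℕ)
    (N Nh : Matrix (Fin a) (Fin a) ℂ → Matrix (Fin b) (Fin b) ℂ)
    (hN : IsCPTP N) (hNh : IsCP Nh)
    (ε : ℝ) (hε0 : 0 < ε) (hε1 : ε < 1)
    (happrox : ∀ ρ : Matrix (Fin a) (Fin a) ℂ, IsDensity ρ →
      loewnerLE (-((ε : ℂ) • (N ρ + ((b : ℂ))⁻¹ • 1))) (Nh ρ - N ρ) ∧
      loewnerLE (Nh ρ - N ρ) ((ε : ℂ) • (N ρ + ((b : ℂ))⁻¹ • 1))) :
    ∀ p : ℝ≥0∞, 1 ≤ p → ∀ ρ : Matrix (Fin a) (Fin a) ℂ, IsDensity ρ →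
      schattenNorm p (Nh ρ - N ρ) ≤
        ε * (schattenNorm p (N ρ) +
          1 / (b : ℝ) ^ (if p = ⊤ then (1 : ℝ) else 1 - 1 / p.toReal)) := by
  intro p hp ρ hρ
  -- positivity facts
  have hNρ : (N ρ).PosSemidef := by
    obtain ⟨s, K, hK⟩ := hN.1
    rw [hK]
    exact aux_sum_psd _ fun i => hρ.1.mul_mul_conjTranspose_same (K i)
  have hNhρ : (Nh ρ).PosSemidef := by
    obtain ⟨s, K, hK⟩ := hNh
    rw [hK]
    exact aux_sum_psd _ fun i => hρ.1.mul_mul_conjTranspose_same (K i)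
  have hX : (Nh ρ - N ρ).IsHermitian := hNhρ.1.sub hNρ.1
  obtain ⟨hle, hge⟩ := happrox ρ hρ
  have hBmX : ((ε : ℂ) • (N ρ + ((b : ℂ))⁻¹ • 1) - (Nh ρ - N ρ)).PosSemidef := hge
  have hXpB : ((Nh ρ - N ρ) + (ε : ℂ) • (N ρ + ((b : ℂ))⁻¹ • 1)).PosSemidef := by
    have := hle
    rw [loewnerLE, sub_neg_eq_add] at this
    exact this
  -- eigenvector column facts
  have hUmem := (hX.eigenvectorUnitary).2
  have hcolX : ∀ i, (fun k => (hX.eigenvectorUnitary : Matrix (Fin b) (Fin b) ℂ) k i)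
      = ⇑(hX.eigenvectorBasis i) := by
    intro i; funext k; exact hX.eigenvectorUnitary_apply k i
  have hunit : ∀ i, star ⇑(hX.eigenvectorBasis i) ⬝ᵥ ⇑(hX.eigenvectorBasis i) = 1 := by
    intro i
    rw [← hcolX i]
    exact aux_col_unit hUmem i
  set x : Fin b → ℝ :=
    fun i => RCLike.re (star ⇑(hX.eigenvectorBasis i) ⬝ᵥ (N ρ) *ᵥ ⇑(hX.eigenvectorBasis i))
    with hxdef
  have hx0 : ∀ i, 0 ≤ x i := fun i => hNρ.re_dotProduct_nonneg ⇑(hX.eigenvectorBasis i)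
  have hxb : ∀ i, |hX.eigenvalues i| ≤ ε * (x i + ((b : ℝ))⁻¹) := by
    intro i
    refine le_trans (aux_abs_eig_le hX hBmX hXpB i) ?_
    rw [aux_qform_smul (N ρ) _ (hunit i) ε b]
  by_cases hb : b = 0
  · -- trivial case
    subst hb
    have hL : schattenNorm p (Nh ρ - N ρ) = 0 := by
      by_cases hptop : p = ⊤
      · subst hptop
        rw [schattenNorm_top']
        exact Real.iSup_of_isEmpty _
      · rw [schattenNorm_ne_top' hptop]
        have hq1 : 1 ≤ p.toReal := by
          rw [← ENNReal.toReal_one]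
          exact ENNReal.toReal_mono hptop hp
        rw [Finset.univ_eq_empty, Finset.sum_empty,
          Real.zero_rpow (by positivity : (1:ℝ)/p.toReal ≠ 0)]
    rw [hL]
    refine mul_nonneg hε0.le (add_nonneg (schattenNorm_nonneg' _ _) ?_)
    positivity
  have hbpos : (0:ℝ) < b := by exact_mod_cast Nat.pos_of_ne_zero hb
  haveI : Nonempty (Fin b) := ⟨⟨0, Nat.pos_of_ne_zero hb⟩⟩
  by_cases hptop : p = ⊤
  · -- sup case
    subst hptop
    rw [schattenNorm_top', schattenNorm_top', if_pos rfl, Real.rpow_one]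
    have hsvX : (⨆ i, singularValues (Nh ρ - N ρ) i) = ⨆ i, |hX.eigenvalues i| :=
      aux_ciSup_congr (aux_image_comp (aux_sv_multiset hX))
    have hsvN : (⨆ i, singularValues (N ρ) i) = ⨆ i, hNρ.1.eigenvalues i := by
      have h1 : (⨆ i, singularValues (N ρ) i) = ⨆ i, |hNρ.1.eigenvalues i| :=
        aux_ciSup_congr (aux_image_comp (aux_sv_multiset hNρ.1))
      rw [h1]
      congr 1
      funext i
      exact abs_of_nonneg (hNρ.eigenvalues_nonneg i)
    rw [hsvX, hsvN]
    refine ciSup_le fun i => ?_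
    refine le_trans (hxb i) ?_
    have hxle : x i ≤ ⨆ j, hNρ.1.eigenvalues j := aux_qform_le_sup hNρ _ (hunit i)
    refine mul_le_mul_of_nonneg_left ?_ hε0.le
    rw [one_div]
    exact add_le_add hxle le_rfl
  · -- finite p case
    rw [schattenNorm_ne_top' hptop, schattenNorm_ne_top' hptop, if_neg hptop]
    have hq1 : 1 ≤ p.toReal := by
      rw [← ENNReal.toReal_one]
      exact ENNReal.toReal_mono hptop hp
    set q := p.toReal with hqdef
    have hq0 : (0:ℝ) < q := lt_of_lt_of_le one_pos hq1
    -- step 1 : sum of sv^q equals sum of |eig|^q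
    have e1 : ∑ i, singularValues (Nh ρ - N ρ) i ^ q = ∑ i, |hX.eigenvalues i| ^ q :=
      aux_sum_comp (aux_sv_multiset hX) (fun t => t ^ q)
    have e2 : ∑ i, |hX.eigenvalues i| ^ q ≤ ∑ i, (ε * (x i + ((b:ℝ))⁻¹)) ^ q :=
      Finset.sum_le_sum fun i _ => Real.rpow_le_rpow (abs_nonneg _) (hxb i) hq0.le
    have e3 : ∑ i, (ε * (x i + ((b:ℝ))⁻¹)) ^ q = ε ^ q * ∑ i, (x i + ((b:ℝ))⁻¹) ^ q := by
      rw [Finset.sum_congr rfl (fun i _ =>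
        Real.mul_rpow hε0.le (add_nonneg (hx0 i) (by positivity)) : ∀ i ∈ Finset.univ,
          (ε * (x i + ((b:ℝ))⁻¹)) ^ q = ε ^ q * (x i + ((b:ℝ))⁻¹) ^ q), ← Finset.mul_sum]
    have sum_nonneg1 : (0:ℝ) ≤ ∑ i, (x i + ((b:ℝ))⁻¹) ^ q :=
      Finset.sum_nonneg fun i _ => Real.rpow_nonneg (add_nonneg (hx0 i) (by positivity)) _
    have lhs_le : (∑ i, singularValues (Nh ρ - N ρ) i ^ q) ^ (1/q)
        ≤ ε * (∑ i, (x i + ((b:ℝ))⁻¹) ^ q) ^ (1/q) := by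
      rw [e1]
      calc (∑ i, |hX.eigenvalues i| ^ q) ^ (1/q)
          ≤ (ε ^ q * ∑ i, (x i + ((b:ℝ))⁻¹) ^ q) ^ (1/q) := by
            refine Real.rpow_le_rpow ?_ (by rw [← e3]; exact e2) (by positivity)
            exact Finset.sum_nonneg fun i _ => Real.rpow_nonneg (abs_nonneg _) _
        _ = ε * (∑ i, (x i + ((b:ℝ))⁻¹) ^ q) ^ (1/q) := by
            rw [Real.mul_rpow (Real.rpow_nonneg hε0.le _) sum_nonneg1, ← Real.rpow_mul hε0.le,
              mul_one_div_cancel hq0.ne', Real.rpow_one]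
    -- Minkowski
    have mink : (∑ i, (x i + ((b:ℝ))⁻¹) ^ q) ^ (1/q)
        ≤ (∑ i, x i ^ q) ^ (1/q) + (∑ _i : Fin b, (((b:ℝ))⁻¹) ^ q) ^ (1/q) :=
      Real.Lp_add_le_of_nonneg (s := Finset.univ) (f := x) (g := fun _ => ((b:ℝ))⁻¹) hq1
        (fun i _ => hx0 i) (fun i _ => by positivity)
    -- Jensen bound
    have jensen : (∑ i, x i ^ q) ^ (1/q) ≤ (∑ i, singularValues (N ρ) i ^ q) ^ (1/q) := by
      have hsum : ∑ i, singularValues (N ρ) i ^ q = ∑ j, hNρ.1.eigenvalues j ^ q := by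
        rw [aux_sum_comp (aux_sv_multiset hNρ.1) (fun t => t ^ q)]
        refine Finset.sum_congr rfl fun j _ => ?_
        rw [abs_of_nonneg (hNρ.eigenvalues_nonneg j)]
      rw [hsum]
      refine Real.rpow_le_rpow (Finset.sum_nonneg fun i _ => Real.rpow_nonneg (hx0 i) _) ?_
        (by positivity)
      have := aux_jensen hNρ hUmem hq1
      calc ∑ i, x i ^ q
          = ∑ i, (RCLike.re (star (fun k => (hX.eigenvectorUnitary : Matrix (Fin b) (Fin b) ℂ) k i)
              ⬝ᵥ (N ρ) *ᵥ (fun k => (hX.eigenvectorUnitary : Matrix (Fin b) (Fin b) ℂ) k i))) ^ q := by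
            refine Finset.sum_congr rfl fun i _ => ?_
            rw [hcolX i]
        _ ≤ ∑ j, hNρ.1.eigenvalues j ^ q := aux_jensen hNρ hUmem hq1
    -- constant term
    have const_eq : (∑ _i : Fin b, (((b:ℝ))⁻¹) ^ q) ^ (1/q) = 1 / (b:ℝ) ^ (1 - 1/q) := by
      rw [Finset.sum_const, Finset.card_univ, Fintype.card_fin, nsmul_eq_mul]
      rw [Real.inv_rpow hbpos.le]
      have h1 : (b:ℝ) * ((b:ℝ) ^ q)⁻¹ = (b:ℝ) ^ ((1:ℝ) - q) := by
        rw [Real.rpow_sub hbpos, Real.rpow_one, div_eq_mul_inv]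
      rw [h1, ← Real.rpow_mul hbpos.le,
        show ((1:ℝ) - q) * (1/q) = -(1 - 1/q) by field_simp; ring,
        Real.rpow_neg hbpos.le]
      exact (one_div _).symm
    calc (∑ i, singularValues (Nh ρ - N ρ) i ^ q) ^ (1/q)
        ≤ ε * (∑ i, (x i + ((b:ℝ))⁻¹) ^ q) ^ (1/q) := lhs_le
      _ ≤ ε * ((∑ i, x i ^ q) ^ (1/q) + (∑ _i : Fin b, (((b:ℝ))⁻¹) ^ q) ^ (1/q)) :=
          mul_le_mul_of_nonneg_left mink hε0.le
      _ ≤ ε * ((∑ i, singularValues (N ρ) i ^ q) ^ (1/q) + 1 / (b:ℝ) ^ (1 - 1/q)) := by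
          rw [const_eq]
          exact mul_le_mul_of_nonneg_left (add_le_add jensen le_rfl) hε0.le

end
end

section
/- Let A, B be finite-dimensional complex Hilbert spaces with |A| ≤ |B|. Let (x_i)_{i=1}^{|B|} be an orthonormal basis of B, let (e_j)_{j=1}^{|A|} be an orthonormal basis of A, and for 1 ≤ i ≤ |B| set ψ_i = (1/√|A|)·Σ_{j=1}^{|A|} e^{2πi ji/|B|} e_j. Define the quantum-classical channel M : L(A) → L(B) by M(X) = (|A|/|B|)·Σ_{i=1}^{|B|} ⟨ψ_i| X |ψ_i⟩ |x_i⟩⟨x_i|. Then M is a CPTP map with Kraus rank at most |B|, and for every 0 < ε < 1/2, every completely positive map M̂ : L(A) → L(B) satisfying (1−ε)M(R) − ε·(tr R)·1_B/|B| ≤ M̂(R) ≤ (1+ε)M(R) + ε·(tr R)·1_B/|B| (Loewner order) for all positive semidefinite R on A has Kraus rank at least |B|. -/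
open scoped Kronecker ENNReal ComplexOrder
open Matrix MeasureTheory

noncomputable section
attribute [local instance] Classical.propDecidable

namespace Aux10

lemma completeness {n : Type*} [Fintype n] [DecidableEq n] (x : n → (n → ℂ))
    (hx : ∀ i j, star (x i) ⬝ᵥ x j = if i = j then 1 else 0) :
    ∑ i, projVec (x i) = (1 : Matrix n n ℂ) := by
  set U : Matrix n n ℂ := Matrix.of (fun i j => x i j) with hU
  have h1 : U * Uᴴ = 1 := by
    ext i j
    have h := hx j i
    simp only [dotProduct, Pi.star_apply] at h
    simp only [Matrix.mul_apply, Matrix.conjTranspose_apply, hU, Matrix.of_apply, Matrix.one_apply]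
    rw [show ∑ k, x i k * star (x j k) = ∑ k, star (x j k) * x i k from
      Finset.sum_congr rfl fun k _ => mul_comm _ _, h]
    by_cases hij : i = j <;> simp [hij, eq_comm]
  have h2 : Uᴴ * U = 1 := mul_eq_one_comm.mp h1
  ext k l
  have h := congrArg (fun M => M l k) h2
  simp only [Matrix.mul_apply, Matrix.conjTranspose_apply, hU, Matrix.of_apply,
    Matrix.one_apply] at h
  simp only [Matrix.sum_apply, projVec, Matrix.of_apply, Pi.star_apply, Matrix.one_apply]
  rw [show ∑ i, x i k * star (x i l) = ∑ i, star (x i l) * x i k from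
    Finset.sum_congr rfl fun i _ => mul_comm _ _, h]
  by_cases hkl : k = l <;> simp [hkl, eq_comm]

lemma quadform_trace {n : Type*} [Fintype n] (v : n → ℂ) (X : Matrix n n ℂ) :
    star v ⬝ᵥ X *ᵥ v = (X * projVec v).trace := by
  simp only [dotProduct, mulVec, trace, diag, Matrix.mul_apply, projVec, Matrix.of_apply,
    Pi.star_apply, Finset.mul_sum, Finset.sum_mul]
  exact Finset.sum_congr rfl fun k _ => Finset.sum_congr rfl fun l _ => by ring

lemma quadform_proj {n : Type*} [Fintype n] (v w : n → ℂ) :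
    star w ⬝ᵥ (projVec v) *ᵥ w = star (star v ⬝ᵥ w) * (star v ⬝ᵥ w) := by
  simp only [dotProduct, mulVec, projVec, Matrix.of_apply, Pi.star_apply,
    star_sum, star_mul', star_star, Finset.mul_sum, Finset.sum_mul]
  rw [Finset.sum_comm]
  exact Finset.sum_congr rfl fun k _ => Finset.sum_congr rfl fun l _ => by ring

lemma trace_proj {n : Type*} [Fintype n] (v : n → ℂ) :
    (projVec v).trace = star v ⬝ᵥ v := by
  simp only [trace, diag, projVec, Matrix.of_apply, dotProduct, Pi.star_apply]
  exact Finset.sum_congr rfl fun k _ => mul_comm _ _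

lemma proj_psd {n : Type*} [Fintype n] (v : n → ℂ) : (projVec v).PosSemidef := by
  rw [posSemidef_iff_dotProduct_mulVec]
  constructor
  · ext i j
    simp [projVec, conjTranspose_apply, mul_comm]
  · intro y
    rw [quadform_proj, mul_comm]
    rw [show star (star v ⬝ᵥ y) = (starRingEnd ℂ) (star v ⬝ᵥ y) from rfl, Complex.mul_conj]
    rw [Complex.zero_le_real]
    exact Complex.normSq_nonneg _

lemma conj_outer_mul {m n : Type*} [Fintype m] [Fintype n] (K : Matrix m n ℂ) (v : n → ℂ) :
    K * projVec v * Kᴴ = projVec (K *ᵥ v) := by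
  ext p q
  simp only [Matrix.mul_apply, projVec, Matrix.of_apply, conjTranspose_apply, mulVec,
    dotProduct, Pi.star_apply, star_sum, star_mul', Finset.sum_mul, Finset.mul_sum]
  exact Finset.sum_congr rfl fun k _ => Finset.sum_congr rfl fun l _ => by ring

lemma outer_mul_outer {m n : Type*} [Fintype m] [Fintype n] (u : m → ℂ) (v : n → ℂ)
    (X : Matrix n n ℂ) :
    (Matrix.of fun p q => u p * star (v q)) * X * (Matrix.of fun p q => u p * star (v q))ᴴ
      = (star v ⬝ᵥ X *ᵥ v) • projVec u := by
  ext p q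
  simp only [Matrix.mul_apply, Matrix.of_apply, conjTranspose_apply, mulVec, dotProduct,
    Pi.star_apply, star_mul', star_star, Matrix.smul_apply, projVec, smul_eq_mul,
    Finset.sum_mul, Finset.mul_sum]
  rw [Finset.sum_comm]
  exact Finset.sum_congr rfl fun k _ => Finset.sum_congr rfl fun l _ => by ring

lemma sum_mulVec' {n ι : Type*} [Fintype n] (s : Finset ι) (P : ι → Matrix n n ℂ) (y : n → ℂ) :
    (∑ t ∈ s, P t) *ᵥ y = ∑ t ∈ s, P t *ᵥ y := by
  ext k
  simp only [mulVec, dotProduct, Matrix.sum_apply, Finset.sum_apply, Finset.sum_mul]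
  exact Finset.sum_comm

lemma quad_sum {n ι : Type*} [Fintype n] (s : Finset ι) (P : ι → Matrix n n ℂ) (y : n → ℂ) :
    star y ⬝ᵥ (∑ t ∈ s, P t) *ᵥ y = ∑ t ∈ s, star y ⬝ᵥ (P t) *ᵥ y := by
  rw [sum_mulVec']; simp [dotProduct, Finset.sum_apply, Finset.mul_sum]; exact Finset.sum_comm

lemma dft_sum (b : ℕ) (hb : 0 < b) (m m' : ℕ) (hm : m < b) (hm' : m' < b) :
    ∑ i : Fin b, Complex.exp (2 * Real.pi * Complex.I * (((m:ℂ) + 1) * (((i:ℕ):ℂ) + 1)) / b) *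
      star (Complex.exp (2 * Real.pi * Complex.I * (((m':ℂ) + 1) * (((i:ℕ):ℂ) + 1)) / b)) =
    if m = m' then (b : ℂ) else 0 := by
  have hbne : (b : ℂ) ≠ 0 := Nat.cast_ne_zero.mpr hb.ne'
  by_cases h : m = m'
  · subst h
    simp only [if_pos rfl]
    have hterm : ∀ i : Fin b,
        Complex.exp (2 * Real.pi * Complex.I * (((m:ℂ) + 1) * (((i:ℕ):ℂ) + 1)) / b) *
          star (Complex.exp (2 * Real.pi * Complex.I * (((m:ℂ) + 1) * (((i:ℕ):ℂ) + 1)) / b)) = 1 := by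
      intro i
      rw [show (star (Complex.exp (2 * Real.pi * Complex.I * (((m:ℂ) + 1) * (((i:ℕ):ℂ) + 1)) / b)) : ℂ)
          = (starRingEnd ℂ) (Complex.exp (2 * Real.pi * Complex.I * (((m:ℂ) + 1) * (((i:ℕ):ℂ) + 1)) / b)) from rfl]
      rw [← Complex.exp_conj, ← Complex.exp_add, show
        ((starRingEnd ℂ) (2 * Real.pi * Complex.I * (((m:ℂ) + 1) * (((i:ℕ):ℂ) + 1)) / b)) =
          -(2 * Real.pi * Complex.I * (((m:ℂ) + 1) * (((i:ℕ):ℂ) + 1)) / b) by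
        simp only [map_div₀, _root_.map_mul, map_add, map_ofNat, Complex.conj_I,
          Complex.conj_ofReal, _root_.map_one, map_natCast]
        ring]
      simp
    rw [Finset.sum_congr rfl (fun i _ => hterm i)]
    simp
  · simp only [if_neg h]
    set d : ℤ := (m : ℤ) - (m' : ℤ) with hd
    have hd0 : d ≠ 0 := by omega
    have hterm : ∀ i : Fin b,
        Complex.exp (2 * Real.pi * Complex.I * (((m:ℂ) + 1) * (((i:ℕ):ℂ) + 1)) / b) *
          star (Complex.exp (2 * Real.pi * Complex.I * (((m':ℂ) + 1) * (((i:ℕ):ℂ) + 1)) / b))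
        = Complex.exp (2 * Real.pi * Complex.I * (d:ℂ) / b) ^ ((i : ℕ) + 1) := by
      intro i
      rw [show (star (Complex.exp (2 * Real.pi * Complex.I * (((m':ℂ) + 1) * (((i:ℕ):ℂ) + 1)) / b)) : ℂ)
          = (starRingEnd ℂ) (Complex.exp (2 * Real.pi * Complex.I * (((m':ℂ) + 1) * (((i:ℕ):ℂ) + 1)) / b)) from rfl]
      rw [← Complex.exp_conj, ← Complex.exp_add, ← Complex.exp_nat_mul]
      congr 1
      rw [show ((starRingEnd ℂ) (2 * Real.pi * Complex.I * (((m':ℂ) + 1) * (((i:ℕ):ℂ) + 1)) / b)) =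
          -(2 * Real.pi * Complex.I * (((m':ℂ) + 1) * (((i:ℕ):ℂ) + 1)) / b) by
        simp only [map_div₀, _root_.map_mul, map_add, map_ofNat, Complex.conj_I,
          Complex.conj_ofReal, _root_.map_one, map_natCast]
        ring]
      field_simp
      push_cast [hd]
      ring
    rw [Finset.sum_congr rfl (fun i _ => hterm i)]
    generalize hg : Complex.exp (2 * Real.pi * Complex.I * (d:ℂ) / b) = ω
    have hωb : ω ^ b = 1 := by
      rw [← hg, ← Complex.exp_nat_mul,
        show (b : ℂ) * (2 * Real.pi * Complex.I * (d : ℂ) / b) = (d : ℂ) * (2 * Real.pi * Complex.I) by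
          field_simp]
      exact Complex.exp_int_mul_two_pi_mul_I d
    have hω1 : ω ≠ 1 := by
      intro hone
      rw [← hg, Complex.exp_eq_one_iff] at hone
      obtain ⟨k, hk⟩ := hone
      have hpi : (Real.pi : ℂ) ≠ 0 := Complex.ofReal_ne_zero.mpr Real.pi_ne_zero
      have hI : Complex.I ≠ 0 := Complex.I_ne_zero
      have h2c : (2 * (Real.pi:ℂ) * Complex.I) ≠ 0 := by simp [hpi, hI]
      have h2 : (d : ℂ) = (k : ℂ) * b := by
        field_simp at hk
        apply mul_left_cancel₀ h2c
        rw [show 2 * (Real.pi:ℂ) * Complex.I * ((k:ℂ) * b) = (k:ℂ) * (2 * Real.pi * Complex.I) * b by ring]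
        rw [hk]; ring
      have h3 : d = k * b := by exact_mod_cast h2
      have h4 : (b:ℤ) ∣ d := ⟨k, by rw [h3]; ring⟩
      have h5 : |d| < (b:ℤ) := by rw [hd, abs_sub_lt_iff]; constructor <;> omega
      exact hd0 (Int.eq_zero_of_abs_lt_dvd h4 h5)
    have hsum : ∑ i : Fin b, ω ^ ((i : ℕ) + 1) = ω * ∑ i ∈ Finset.range b, ω ^ i := by
      rw [Fin.sum_univ_eq_sum_range (fun i => ω ^ (i + 1)) b, Finset.mul_sum]
      exact Finset.sum_congr rfl fun i _ => by rw [pow_succ']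
    rw [hsum, geom_sum_eq hω1, hωb]
    simp

lemma exists_orth {s b : ℕ} (hsb : s < b) (u : Fin s → (Fin b → ℂ)) :
    ∃ y : Fin b → ℂ, y ≠ 0 ∧ ∀ t, star (u t) ⬝ᵥ y = 0 := by
  set U : Matrix (Fin s) (Fin b) ℂ := Matrix.of (fun t q => star (u t q)) with hU
  have hni : ¬ Function.Injective U.mulVecLin := by
    intro hinj
    have := LinearMap.finrank_le_finrank_of_injective hinj
    rw [Module.finrank_pi, Module.finrank_pi] at this
    simp only [Fintype.card_fin] at this
    omega
  obtain ⟨y1, y2, hfy, hne⟩ := Function.not_injective_iff.mp hni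
  refine ⟨y1 - y2, sub_ne_zero_of_ne hne, fun t => ?_⟩
  have h0 : U.mulVecLin (y1 - y2) = 0 := by rw [map_sub, hfy, sub_self]
  have := congrFun h0 t
  simp only [mulVecLin_apply, mulVec, dotProduct, hU, Matrix.of_apply, Pi.zero_apply] at this
  simpa [dotProduct, Pi.star_apply] using this

end Aux10

/-- The quantum-classical channel `M(X) = (|A|/|B|) ∑_i ⟨ψ_i|X|ψ_i⟩ |x_i⟩⟨x_i|`. -/
def qcChan (a b : ℕ) (x : Fin b → (Fin b → ℂ)) (ψ : Fin b → (Fin a → ℂ)) :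
    Matrix (Fin a) (Fin a) ℂ → Matrix (Fin b) (Fin b) ℂ :=
  fun X => ((a : ℂ) / (b : ℂ)) • ∑ i, (star (ψ i) ⬝ᵥ X *ᵥ ψ i) • projVec (x i)

/-- the quantum-classical channel built on a tight frame is CPTP with
Kraus rank at most `|B|`, and any CP map approximating it in the two-sided Loewner sense
has Kraus rank at least `|B|`. -/
theorem stmt10 (a b : ℕ) (ha : 0 < a) (hab : a ≤ b)
    (x : Fin b → (Fin b → ℂ))
    (hx : ∀ i j, star (x i) ⬝ᵥ x j = if i = j then 1 else 0)
    (e : Fin a → (Fin a → ℂ))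
    (he : ∀ i j, star (e i) ⬝ᵥ e j = if i = j then 1 else 0)
    (ψ : Fin b → (Fin a → ℂ))
    (hψ : ∀ i, ψ i = fun t => ((Real.sqrt a : ℂ))⁻¹ *
      ∑ j : Fin a, Complex.exp
        (2 * Real.pi * Complex.I * (((j.1 : ℕ) + 1) * ((i.1 : ℕ) + 1)) / b) * e j t) :
    IsCPTP (qcChan a b x ψ) ∧
    (∃ K : Fin b → Matrix (Fin b) (Fin a) ℂ, HasKraus (qcChan a b x ψ) K) ∧
    ∀ ε : ℝ, 0 < ε → ε < 1 / 2 →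
      ∀ Mh : Matrix (Fin a) (Fin a) ℂ → Matrix (Fin b) (Fin b) ℂ, IsCP Mh →
        (∀ R : Matrix (Fin a) (Fin a) ℂ, R.PosSemidef →
          loewnerLE (((1 - ε : ℝ) : ℂ) • qcChan a b x ψ R - ((ε : ℂ) * R.trace / b) • 1)
            (Mh R) ∧
          loewnerLE (Mh R)
            (((1 + ε : ℝ) : ℂ) • qcChan a b x ψ R + ((ε : ℂ) * R.trace / b) • 1)) →
        b ≤ krausRank Mh := by
  have hb : 0 < b := lt_of_lt_of_le ha hab
  have hbne : (b:ℂ) ≠ 0 := Nat.cast_ne_zero.mpr hb.ne'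
  have hane : (a:ℂ) ≠ 0 := Nat.cast_ne_zero.mpr ha.ne'
  set s0 : ℂ := ((Real.sqrt a : ℂ))⁻¹ with hs0
  set c : Fin a → Fin b → ℂ := fun j i =>
    Complex.exp (2 * Real.pi * Complex.I * (((j.1 : ℕ) + 1) * ((i.1 : ℕ) + 1)) / b) with hc
  have hψc : ∀ i, ψ i = fun t => s0 * ∑ j : Fin a, c j i * e j t := fun i => hψ i
  have hstar_s0 : star s0 = s0 := by
    rw [hs0]; simp [← Complex.star_def]
  have hss : s0 * s0 = (a:ℂ)⁻¹ := by
    rw [hs0, ← mul_inv]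
    congr 1
    rw [← Complex.ofReal_mul, Real.mul_self_sqrt (Nat.cast_nonneg a)]
    push_cast
    rfl
  have hgram : ∀ j j' : Fin a, (∑ i : Fin b, c j i * star (c j' i)) =
      if j = j' then (b:ℂ) else 0 := by
    intro j j'
    have h := Aux10.dft_sum b hb j.1 j'.1 (lt_of_lt_of_le j.2 hab) (lt_of_lt_of_le j'.2 hab)
    simp only [hc]
    simpa [Fin.val_eq_val] using h
  have hcc : ∀ (j : Fin a) (i : Fin b), c j i * star (c j i) = 1 := by
    intro j i
    rw [show star (c j i) = (starRingEnd ℂ) (c j i) from rfl]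
    simp only [hc]
    rw [← Complex.exp_conj, ← Complex.exp_add]
    rw [show (starRingEnd ℂ) (2 * Real.pi * Complex.I * ((((j.1:ℕ):ℂ) + 1) * (((i.1:ℕ):ℂ) + 1)) / b)
        = -(2 * Real.pi * Complex.I * ((((j.1:ℕ):ℂ) + 1) * (((i.1:ℕ):ℂ) + 1)) / b) by
      simp only [map_div₀, _root_.map_mul, map_add, map_ofNat, Complex.conj_I,
        Complex.conj_ofReal, _root_.map_one, map_natCast]
      ring]
    simp
  -- Gram completeness for ψ
  have hψgram : ∑ i : Fin b, projVec (ψ i) =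
      ((b:ℂ)/(a:ℂ)) • (1 : Matrix (Fin a) (Fin a) ℂ) := by
    ext k l
    simp only [Matrix.sum_apply, projVec, Matrix.of_apply, Pi.star_apply]
    have hterm : ∀ i : Fin b, ψ i k * star (ψ i l) =
        ∑ j : Fin a, ∑ j' : Fin a, (c j i * star (c j' i)) *
          ((a:ℂ)⁻¹ * (e j k * star (e j' l))) := by
      intro i
      rw [hψc i]
      have h1 : (s0 * ∑ j : Fin a, c j i * e j k) * star (s0 * ∑ j' : Fin a, c j' i * e j' l)
          = (s0 * s0) * ((∑ j : Fin a, c j i * e j k) *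
              (∑ j' : Fin a, star (c j' i) * star (e j' l))) := by
        simp only [star_mul', star_sum, hstar_s0]
        ring
      rw [h1, hss, Finset.sum_mul_sum, Finset.mul_sum]
      refine Finset.sum_congr rfl fun j _ => ?_
      rw [Finset.mul_sum]
      refine Finset.sum_congr rfl fun j' _ => ?_
      ring
    rw [Finset.sum_congr rfl (fun i _ => hterm i), Finset.sum_comm]
    have hswap : ∀ j : Fin a, (∑ i : Fin b, ∑ j' : Fin a, (c j i * star (c j' i)) *
          ((a:ℂ)⁻¹ * (e j k * star (e j' l))))
        = ∑ j' : Fin a, (if j = j' then (b:ℂ) else 0) * ((a:ℂ)⁻¹ * (e j k * star (e j' l))) := by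
      intro j
      rw [Finset.sum_comm]
      exact Finset.sum_congr rfl fun j' _ => by rw [← Finset.sum_mul, hgram]
    rw [Finset.sum_congr rfl (fun j _ => hswap j)]
    simp only [ite_mul, zero_mul, Finset.sum_ite_eq, Finset.mem_univ, if_true]
    have hcmpl := congrFun (congrFun (Aux10.completeness e he) k) l
    simp only [Matrix.sum_apply, projVec, Matrix.of_apply, Pi.star_apply] at hcmpl
    rw [show ∑ j : Fin a, (b:ℂ) * ((a:ℂ)⁻¹ * (e j k * star (e j l)))
        = ((b:ℂ) * (a:ℂ)⁻¹) * ∑ j : Fin a, e j k * star (e j l) by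
      rw [Finset.mul_sum]; exact Finset.sum_congr rfl fun j _ => by ring]
    rw [hcmpl]
    simp [Matrix.smul_apply, div_eq_mul_inv]
  -- Kraus operators
  set t0 : ℂ := ((Real.sqrt ((a:ℝ)/(b:ℝ)) : ℝ) : ℂ) with ht0
  have hstar_t0 : star t0 = t0 := by rw [ht0]; simp [← Complex.star_def]
  have htt : t0 * t0 = (a:ℂ)/(b:ℂ) := by
    rw [ht0, ← Complex.ofReal_mul, Real.mul_self_sqrt (by positivity)]
    push_cast
    rfl
  set K : Fin b → Matrix (Fin b) (Fin a) ℂ :=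
    fun i => t0 • Matrix.of (fun p q => x i p * star (ψ i q)) with hK
  have hKr : HasKraus (qcChan a b x ψ) K := by
    intro X
    have hterm : ∀ i : Fin b, K i * X * (K i)ᴴ
        = ((a:ℂ)/(b:ℂ)) • ((star (ψ i) ⬝ᵥ X *ᵥ ψ i) • projVec (x i)) := by
      intro i
      simp only [hK]
      rw [conjTranspose_smul, hstar_t0, Matrix.smul_mul, Matrix.smul_mul, Matrix.mul_smul,
        smul_smul, htt, Aux10.outer_mul_outer]
    rw [Finset.sum_congr rfl (fun i _ => hterm i), ← Finset.smul_sum]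
    simp only [qcChan]
  have hTP : IsTP (qcChan a b x ψ) := by
    intro X
    have hq : ∑ i : Fin b, star (ψ i) ⬝ᵥ X *ᵥ ψ i = ((b:ℂ)/(a:ℂ)) * X.trace := by
      rw [Finset.sum_congr rfl (fun i _ => Aux10.quadform_trace (ψ i) X), ← Matrix.trace_sum,
        ← Matrix.mul_sum, hψgram, Matrix.mul_smul, mul_one, Matrix.trace_smul, smul_eq_mul]
    simp only [qcChan, Matrix.trace_smul, Matrix.trace_sum, smul_eq_mul]
    have h2 : ∑ i : Fin b, star (ψ i) ⬝ᵥ X *ᵥ ψ i * (projVec (x i)).trace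
        = ∑ i : Fin b, star (ψ i) ⬝ᵥ X *ᵥ ψ i := by
      refine Finset.sum_congr rfl fun i _ => ?_
      rw [Aux10.trace_proj, hx i i, if_pos rfl, mul_one]
    rw [h2, hq]
    field_simp
  refine ⟨⟨⟨b, K, hKr⟩, hTP⟩, ⟨K, hKr⟩, ?_⟩
  intro ε hε1 hε2 Mh hCP happrox
  set j0 : Fin a := ⟨0, ha⟩ with hj0
  set v : Fin a → ℂ := e j0 with hv
  have hvtr : (projVec v).trace = 1 := by
    rw [Aux10.trace_proj]
    simpa using he j0 j0
  have hpsd := Aux10.proj_psd v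
  have hz : ∀ i, star v ⬝ᵥ ψ i = s0 * c j0 i := by
    intro i
    rw [hψc i]
    have h1 : star v ⬝ᵥ (fun t => s0 * ∑ j : Fin a, c j i * e j t)
        = s0 * ∑ j : Fin a, c j i * (star v ⬝ᵥ e j) := by
      simp only [dotProduct, Pi.star_apply, Finset.mul_sum]
      rw [Finset.sum_comm]
      refine Finset.sum_congr rfl fun j _ => ?_
      exact Finset.sum_congr rfl fun tt _ => by ring
    rw [h1]
    rw [Finset.sum_congr rfl (fun j _ => by rw [hv, he j0 j])]
    simp
  have hq1 : ∀ i, star (ψ i) ⬝ᵥ (projVec v) *ᵥ (ψ i) = (a:ℂ)⁻¹ := by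
    intro i
    rw [Aux10.quadform_proj, hz i]
    rw [star_mul', hstar_s0]
    rw [show s0 * star (c j0 i) * (s0 * c j0 i) = (s0 * s0) * (c j0 i * star (c j0 i)) by ring]
    rw [hss, hcc]
    simp
  have hR : qcChan a b x ψ (projVec v) = ((b:ℂ))⁻¹ • (1 : Matrix (Fin b) (Fin b) ℂ) := by
    simp only [qcChan]
    rw [Finset.sum_congr rfl (fun i _ => by rw [hq1 i])]
    rw [← Finset.smul_sum, Aux10.completeness x hx, smul_smul]
    congr 1
    field_simp
  have key : ∀ (s : ℕ) (K' : Fin s → Matrix (Fin b) (Fin a) ℂ), HasKraus Mh K' → b ≤ s := by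
    intro s K' hK'
    by_contra hlt
    push_neg at hlt
    obtain ⟨y, hy0, hyorth⟩ := Aux10.exists_orth hlt (fun t => K' t *ᵥ v)
    have hlow := (happrox (projVec v) hpsd).1
    have hquad := Matrix.PosSemidef.dotProduct_mulVec_nonneg hlow y
    have hMh : Mh (projVec v) = ∑ t, projVec (K' t *ᵥ v) := by
      rw [hK' (projVec v)]
      exact Finset.sum_congr rfl fun t _ => Aux10.conj_outer_mul _ _
    have hzero : star y ⬝ᵥ (Mh (projVec v)) *ᵥ y = 0 := by
      rw [hMh, Aux10.quad_sum]
      refine Finset.sum_eq_zero fun t _ => ?_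
      rw [Aux10.quadform_proj, hyorth t]
      simp
    obtain ⟨q0, hq0⟩ := Function.ne_iff.mp hy0
    set r : ℝ := ∑ q, Complex.normSq (y q) with hr
    have hrpos : 0 < r := by
      rw [hr]
      exact Finset.sum_pos' (fun q _ => Complex.normSq_nonneg _)
        ⟨q0, Finset.mem_univ _, Complex.normSq_pos.mpr hq0⟩
    have hyy : star y ⬝ᵥ y = (r : ℂ) := by
      rw [hr]
      push_cast
      simp only [dotProduct, Pi.star_apply]
      exact Finset.sum_congr rfl fun q _ => by
        rw [mul_comm, show (star (y q) : ℂ) = (starRingEnd ℂ) (y q) from rfl, Complex.mul_conj]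
    have hLy : star y ⬝ᵥ (((1 - ε : ℝ) : ℂ) • qcChan a b x ψ (projVec v)
        - ((ε : ℂ) * (projVec v).trace / b) • 1) *ᵥ y = (((1-2*ε)/b * r : ℝ) : ℂ) := by
      rw [hR, hvtr, smul_smul, Matrix.sub_mulVec, Matrix.smul_mulVec,
        Matrix.smul_mulVec, Matrix.one_mulVec, dotProduct_sub, dotProduct_smul,
        dotProduct_smul, hyy]
      push_cast
      simp only [smul_eq_mul]
      field_simp
      ring
    rw [Matrix.sub_mulVec, dotProduct_sub, hzero, hLy, zero_sub] at hquad
    rw [← Complex.ofReal_neg, Complex.zero_le_real] at hquad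
    have hpos : 0 < (1-2*ε)/b * r := by
      have h12 : 0 < 1 - 2*ε := by linarith
      have hbr : (0:ℝ) < b := by exact_mod_cast hb
      positivity
    linarith
  obtain ⟨s, K', hK'⟩ := hCP
  have hne : {s : ℕ | ∃ Kk : Fin s → Matrix (Fin b) (Fin a) ℂ, HasKraus Mh Kk}.Nonempty :=
    ⟨s, K', hK'⟩
  obtain ⟨K'', hK''⟩ := Nat.sInf_mem hne
  exact key _ K'' hK''

end
end

section
/- Let N : L(A) → L(B) be a CPTP map and N̂ : L(A) → L(B) a completely positive map, and let 0 < ε < 1/2. Assume that for every density operator ρ on A one has (1−ε)N(ρ) − ε·1_B/|B| ≤ N̂(ρ) ≤ (1+ε)N(ρ) + ε·1_B/|B| in the Loewner order. Then for every density operator ρ on A and every density operator ω on B, |F(N̂(ρ), ω) − F(N(ρ), ω)| ≤ (3/√2)·√ε. -/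
open scoped Kronecker ENNReal ComplexOrder
open Matrix MeasureTheory

noncomputable section
attribute [local instance] Classical.propDecidable

section AuxLemmas
variable {n : Type*} [Fintype n] [DecidableEq n]

lemma star_mul_self_eigU {A : Matrix n n ℂ} (hA : A.IsHermitian) :
    (star hA.eigenvectorUnitary : Matrix n n ℂ) * (hA.eigenvectorUnitary : Matrix n n ℂ) = 1 :=
  Unitary.star_mul_self_of_mem (SetLike.coe_mem _)

lemma mul_star_self_eigU {A : Matrix n n ℂ} (hA : A.IsHermitian) :
    (hA.eigenvectorUnitary : Matrix n n ℂ) * (star hA.eigenvectorUnitary : Matrix n n ℂ) = 1 :=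
  Unitary.mul_star_self_of_mem (SetLike.coe_mem _)

lemma myCfc_herm {A : Matrix n n ℂ} (hA : A.IsHermitian) (f : ℝ → ℝ) : (hA.cfc f).IsHermitian := by
  unfold Matrix.IsHermitian.cfc
  simp only [Unitary.conjStarAlgAut_apply]
  simp only [IsHermitian, conjTranspose_mul, conjTranspose_conjTranspose,
    star_eq_conjTranspose, diagonal_conjTranspose, mul_assoc]
  congr!
  ext i
  simp [Pi.star_def, Function.comp]

lemma myCfc_mul {A : Matrix n n ℂ} (hA : A.IsHermitian) (f g : ℝ → ℝ) :
    hA.cfc f * hA.cfc g = hA.cfc (fun x => f x * g x) := by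
  unfold Matrix.IsHermitian.cfc
  simp only [Unitary.conjStarAlgAut_apply]
  have key : ∀ X : Matrix n n ℂ, (star hA.eigenvectorUnitary : Matrix n n ℂ)
      * ((hA.eigenvectorUnitary : Matrix n n ℂ) * X) = X := fun X => by
    rw [← mul_assoc, star_mul_self_eigU, one_mul]
  simp only [mul_assoc]
  rw [key, ← mul_assoc (diagonal _), diagonal_mul_diagonal]
  congr 2
  ext i j
  by_cases h : i = j <;> simp [diagonal, h, Function.comp]

lemma myCfc_trace {A : Matrix n n ℂ} (hA : A.IsHermitian) (f : ℝ → ℝ) :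
    (hA.cfc f).trace = ((∑ i, f (hA.eigenvalues i) : ℝ) : ℂ) := by
  unfold Matrix.IsHermitian.cfc
  simp only [Unitary.conjStarAlgAut_apply]
  rw [trace_mul_cycle, star_mul_self_eigU, one_mul, trace_diagonal]
  push_cast
  simp [Function.comp]

lemma myCfc_psd {A : Matrix n n ℂ} (hA : A.IsHermitian) (f : ℝ → ℝ)
    (hf : ∀ i, 0 ≤ f (hA.eigenvalues i)) : (hA.cfc f).PosSemidef := by
  unfold Matrix.IsHermitian.cfc
  have := (Matrix.PosSemidef.diagonal (R := ℂ) (d := RCLike.ofReal ∘ f ∘ hA.eigenvalues)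
    (fun i => by simpa using (RCLike.ofReal_nonneg (K := ℂ)).mpr (hf i))).mul_mul_conjTranspose_same
    (hA.eigenvectorUnitary : Matrix n n ℂ)
  simpa [star_eq_conjTranspose] using this

lemma myCfc_id {A : Matrix n n ℂ} (hA : A.IsHermitian) : hA.cfc (fun x => x) = A :=
  hA.spectral_theorem.symm

lemma myCfc_const {A : Matrix n n ℂ} (hA : A.IsHermitian) (r : ℝ) :
    hA.cfc (fun _ => r) = (r : ℂ) • 1 := by
  unfold Matrix.IsHermitian.cfc
  simp only [Unitary.conjStarAlgAut_apply]
  have : diagonal (RCLike.ofReal ∘ (fun _ : ℝ => r) ∘ hA.eigenvalues) = ((r:ℂ) • 1 : Matrix n n ℂ) := by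
    rw [smul_one_eq_diagonal]
    rfl
  rw [this, mul_smul_comm, smul_mul_assoc, mul_one, mul_star_self_eigU]

lemma myCfc_smul {A : Matrix n n ℂ} (hA : A.IsHermitian) (f : ℝ → ℝ) (r : ℝ) :
    (r : ℂ) • hA.cfc f = hA.cfc (fun x => r * f x) := by
  unfold Matrix.IsHermitian.cfc
  simp only [Unitary.conjStarAlgAut_apply]
  rw [← smul_mul_assoc, ← mul_smul_comm]
  congr 1
  congr 1
  ext i j
  by_cases h : i = j <;> simp [diagonal, h, Function.comp]

lemma myCfc_sub {A : Matrix n n ℂ} (hA : A.IsHermitian) (f g : ℝ → ℝ) :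
    hA.cfc f - hA.cfc g = hA.cfc (fun x => f x - g x) := by
  unfold Matrix.IsHermitian.cfc
  simp only [Unitary.conjStarAlgAut_apply]
  rw [← sub_mul, ← mul_sub]
  congr 2
  ext i j
  by_cases h : i = j <;> simp [diagonal, h, Function.comp]

def Matrix.PosSemidef.sqrt {A : Matrix n n ℂ} (hA : A.PosSemidef) : Matrix n n ℂ :=
  hA.1.cfc Real.sqrt

lemma Matrix.PosSemidef.posSemidef_sqrt {A : Matrix n n ℂ} (hA : A.PosSemidef) :
    hA.sqrt.PosSemidef :=
  myCfc_psd hA.1 _ (fun _ => Real.sqrt_nonneg _)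

lemma Matrix.PosSemidef.sqrt_mul_self {A : Matrix n n ℂ} (hA : A.PosSemidef) :
    hA.sqrt * hA.sqrt = A := by
  have h : hA.sqrt * hA.sqrt = hA.1.cfc (fun x => Real.sqrt x * Real.sqrt x) :=
    myCfc_mul hA.1 _ _
  rw [h]
  conv_rhs => rw [← myCfc_id hA.1]
  unfold Matrix.IsHermitian.cfc
  congr 2
  funext i
  simp [Function.comp, Real.mul_self_sqrt (hA.eigenvalues_nonneg i)]

open scoped MatrixOrder in
lemma Matrix.PosSemidef.eq_sqrt_of_sq_eq {A B : Matrix n n ℂ} (hA : A.PosSemidef)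
    (hB : B.PosSemidef) (hAB : A ^ 2 = B) : A = hB.sqrt := by
  have h1 : CFC.sqrt B = A := CFC.sqrt_unique (by rw [← hAB, sq]) hA.nonneg
  rw [← h1, CFC.sqrt_eq_cfc, cfc_nnreal_eq_real _ B, hB.1.cfc_eq]
  unfold Matrix.PosSemidef.sqrt
  congr 1
  funext x
  unfold Real.sqrt
  rfl

/-- trace of a Hermitian matrix as sum of eigenvalues -/
lemma herm_trace {A : Matrix n n ℂ} (hA : A.IsHermitian) :
    A.trace = ((∑ i, hA.eigenvalues i : ℝ) : ℂ) := by
  conv_lhs => rw [← myCfc_id hA]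
  rw [myCfc_trace]

def trSqrt (A : Matrix n n ℂ) : ℝ :=
  if h : A.IsHermitian then ∑ i, Real.sqrt (h.eigenvalues i) else 0

lemma trSqrt_eq {A : Matrix n n ℂ} (hA : A.IsHermitian) :
    trSqrt A = ∑ i, Real.sqrt (hA.eigenvalues i) := dif_pos hA

lemma trSqrt_nonneg (A : Matrix n n ℂ) : 0 ≤ trSqrt A := by
  unfold trSqrt
  split
  · exact Finset.sum_nonneg fun i _ => Real.sqrt_nonneg _
  · exact le_refl 0

/-- bridge : trace of the psd sqrt is trSqrt -/
lemma sqrt_trace_re {A : Matrix n n ℂ} (hA : A.PosSemidef) :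
    (hA.sqrt).trace.re = trSqrt A := by
  rw [show hA.sqrt = hA.1.cfc Real.sqrt from rfl, myCfc_trace, trSqrt_eq hA.1]
  simp

lemma psd_trace_re_nonneg {A : Matrix n n ℂ} (hA : A.PosSemidef) : 0 ≤ A.trace.re := by
  rw [herm_trace hA.1]
  simpa using Finset.sum_nonneg fun i _ => hA.eigenvalues_nonneg i

lemma trace_mul_psd_re_nonneg {P Q : Matrix n n ℂ} (hP : P.PosSemidef) (hQ : Q.PosSemidef) :
    0 ≤ ((P * Q).trace).re := by
  have h1 : P * Q = hP.sqrt * (hP.sqrt * Q) := by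
    rw [← mul_assoc, hP.sqrt_mul_self]
  have h2 : ((hP.sqrt * (hP.sqrt * Q)).trace) = ((hP.sqrt * Q) * hP.sqrt).trace := by
    rw [trace_mul_comm]
  have h3 : (hP.sqrt * Q * hP.sqrt).PosSemidef := by
    have := hQ.mul_mul_conjTranspose_same hP.sqrt
    rwa [hP.posSemidef_sqrt.1.eq] at this
  rw [h1, h2]
  exact psd_trace_re_nonneg h3

lemma amgm {A B : Matrix n n ℂ} (hA : A.PosSemidef) (hB : B.IsHermitian)
    (g : ℝ → ℝ) (hg : ∀ x, 0 < g x) :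
    trSqrt A ≤ ((A * hB.cfc (fun x => (g x)⁻¹)).trace.re + ∑ i, g (hB.eigenvalues i)) / 2 := by
  have fe1 : (fun x : ℝ => (Real.sqrt (g x))⁻¹ * (Real.sqrt (g x))⁻¹) = (fun x => (g x)⁻¹) := by
    funext y
    rw [← mul_inv, Real.mul_self_sqrt (hg y).le]
  have fe2 : (fun x : ℝ => (Real.sqrt (g x))⁻¹ * Real.sqrt (g x)) = fun _ : ℝ => (1:ℝ) := by
    funext y
    exact inv_mul_cancel₀ (Real.sqrt_pos.mpr (hg y)).ne'
  have fe3 : (fun x : ℝ => Real.sqrt (g x) * (Real.sqrt (g x))⁻¹) = fun _ : ℝ => (1:ℝ) := by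
    funext y
    exact mul_inv_cancel₀ (Real.sqrt_pos.mpr (hg y)).ne'
  have fe4 : (fun x : ℝ => Real.sqrt (g x) * Real.sqrt (g x)) = g := by
    funext y
    rw [Real.mul_self_sqrt (hg y).le]
  set S := hA.sqrt with hS
  set C := hB.cfc (fun x => (Real.sqrt (g x))⁻¹) with hC
  set G := hB.cfc (fun x => Real.sqrt (g x)) with hG
  set X := C * S with hX
  have hSh : Sᴴ = S := hA.posSemidef_sqrt.1
  have hCh : Cᴴ = C := myCfc_herm hB _
  have hGh : Gᴴ = G := myCfc_herm hB _
  have e1 : Xᴴ * X = S * hB.cfc (fun x => (g x)⁻¹) * S := by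
    rw [hX, conjTranspose_mul, hSh, hCh]
    have hCC : C * C = hB.cfc (fun x => (g x)⁻¹) := by rw [hC, myCfc_mul, fe1]
    calc S * C * (C * S) = S * (C * C) * S := by noncomm_ring
    _ = _ := by rw [hCC]
  have e2 : Xᴴ * G = S := by
    rw [hX, conjTranspose_mul, hSh, hCh, mul_assoc, hC, hG, myCfc_mul, fe2,
      myCfc_const, Complex.ofReal_one, one_smul, mul_one]
  have e3 : Gᴴ * X = S := by
    rw [hGh, hX, ← mul_assoc, hG, hC, myCfc_mul, fe3,
      myCfc_const, Complex.ofReal_one, one_smul, one_mul]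
  have e4 : Gᴴ * G = hB.cfc g := by
    rw [hGh, hG, myCfc_mul, fe4]
  have t1 : (S * hB.cfc (fun x => (g x)⁻¹) * S).trace = (A * hB.cfc (fun x => (g x)⁻¹)).trace := by
    rw [trace_mul_cycle, hA.sqrt_mul_self, trace_mul_comm]
  have expand : (X - G)ᴴ * (X - G) = Xᴴ * X - Xᴴ * G - (Gᴴ * X - Gᴴ * G) := by
    rw [conjTranspose_sub]
    noncomm_ring
  have h0 := psd_trace_re_nonneg (posSemidef_conjTranspose_mul_self (X - G))
  rw [expand, trace_sub, trace_sub, trace_sub, e1, e2, e3, e4, t1] at h0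
  simp only [Complex.sub_re] at h0
  have tS : S.trace.re = trSqrt A := sqrt_trace_re hA
  have tG : (hB.cfc g).trace.re = ∑ i, g (hB.eigenvalues i) := by
    rw [myCfc_trace]
    simp
  rw [tS, tG] at h0
  linarith

lemma main_bound {A P Q : Matrix n n ℂ} (hA : A.PosSemidef) (hP : P.PosSemidef)
    (hQ : Q.PosSemidef) (s c : ℝ) (hs : 0 ≤ s) (hc : 0 < c)
    (hle : ((s:ℂ) • P + Q - A).PosSemidef) :
    trSqrt A ≤ Real.sqrt s * trSqrt P + (Q.trace.re / c + (Fintype.card n) * c) / 2 := by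
  set g : ℝ → ℝ := fun x => Real.sqrt s * Real.sqrt x + c with hgdef
  have hg : ∀ x, 0 < g x := fun x =>
    add_pos_of_nonneg_of_pos (mul_nonneg (Real.sqrt_nonneg _) (Real.sqrt_nonneg _)) hc
  have h1 := amgm hA hP.1 g hg
  set R := hP.1.cfc (fun x => (g x)⁻¹) with hRdef
  have hRpsd : R.PosSemidef := myCfc_psd hP.1 _ (fun i => inv_nonneg.mpr (hg _).le)
  have step1 : ((A * R).trace).re ≤ ((((s:ℂ) • P + Q) * R).trace).re := by
    have hdiff := trace_mul_psd_re_nonneg hle hRpsd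
    have hmm : ((s:ℂ) • P + Q - A) * R = ((s:ℂ) • P + Q) * R - A * R := by noncomm_ring
    rw [hmm, trace_sub] at hdiff
    simp only [Complex.sub_re] at hdiff
    linarith
  have hsplitmul : (((s:ℂ) • P + Q) * R).trace = (((s:ℂ) • P) * R).trace + (Q * R).trace := by
    rw [add_mul, trace_add]
  have step2 : ((((s:ℂ) • P) * R).trace).re ≤ Real.sqrt s * trSqrt P := by
    have hPR : P * R = hP.1.cfc (fun x => x * (g x)⁻¹) := by
      conv_lhs => rw [← myCfc_id hP.1]
      rw [myCfc_mul]
    have h2 : ((s:ℂ) • P) * R = (s:ℂ) • (P * R) := smul_mul_assoc _ _ _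
    rw [h2, trace_smul, hPR, myCfc_trace]
    have : ∀ i, s * (hP.1.eigenvalues i * (g (hP.1.eigenvalues i))⁻¹)
        ≤ Real.sqrt s * Real.sqrt (hP.1.eigenvalues i) := by
      intro i
      set l := hP.1.eigenvalues i with hl
      have hl0 : 0 ≤ l := hP.eigenvalues_nonneg i
      set u := Real.sqrt s * Real.sqrt l with hu
      have hu0 : 0 ≤ u := mul_nonneg (Real.sqrt_nonneg _) (Real.sqrt_nonneg _)
      have husq : u * u = s * l := by
        rw [hu]
        rw [mul_mul_mul_comm, Real.mul_self_sqrt hs, Real.mul_self_sqrt hl0]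
      have hgl : g l = u + c := rfl
      rw [hgl, ← mul_assoc]
      rw [mul_inv_le_iff₀ (by linarith)]
      nlinarith
    calc ((s:ℂ) • ((∑ i, hP.1.eigenvalues i * (g (hP.1.eigenvalues i))⁻¹ : ℝ) : ℂ)).re
        = s * ∑ i, hP.1.eigenvalues i * (g (hP.1.eigenvalues i))⁻¹ := by
          simp [Complex.smul_re]
      _ = ∑ i, s * (hP.1.eigenvalues i * (g (hP.1.eigenvalues i))⁻¹) := by
          rw [Finset.mul_sum]
      _ ≤ ∑ i, Real.sqrt s * Real.sqrt (hP.1.eigenvalues i) :=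
          Finset.sum_le_sum (fun i _ => this i)
      _ = Real.sqrt s * trSqrt P := by rw [trSqrt_eq hP.1, Finset.mul_sum]
  have step3 : ((Q * R).trace).re ≤ Q.trace.re / c := by
    have hEpsd : (hP.1.cfc (fun x => c⁻¹ - (g x)⁻¹)).PosSemidef := by
      refine myCfc_psd hP.1 _ (fun i => ?_)
      have : (g (hP.1.eigenvalues i))⁻¹ ≤ c⁻¹ := by
        apply inv_anti₀ hc
        exact le_add_of_nonneg_left (mul_nonneg (Real.sqrt_nonneg _) (Real.sqrt_nonneg _))
      linarith
    have hsplit : hP.1.cfc (fun x => c⁻¹ - (g x)⁻¹) = ((c⁻¹ : ℝ) : ℂ) • 1 - R := by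
      rw [← myCfc_const hP.1 c⁻¹, hRdef, myCfc_sub]
    have h3 := trace_mul_psd_re_nonneg hQ hEpsd
    rw [hsplit] at h3
    have hexp : Q * (((c⁻¹ : ℝ) : ℂ) • 1 - R) = ((c⁻¹ : ℝ) : ℂ) • Q - Q * R := by
      rw [mul_sub, mul_smul_comm, mul_one]
    rw [hexp, trace_sub, trace_smul] at h3
    simp only [Complex.sub_re, Complex.smul_re, Complex.ofReal_re, Complex.ofReal_im,
      smul_eq_mul, Complex.mul_re, zero_mul, sub_zero] at h3
    rw [div_eq_inv_mul]
    linarith [h3]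
  have step4 : ∑ i, g (hP.1.eigenvalues i)
      = Real.sqrt s * trSqrt P + (Fintype.card n) * c := by
    rw [hgdef]
    rw [Finset.sum_add_distrib, ← Finset.mul_sum, trSqrt_eq hP.1]
    simp [Finset.sum_const, mul_comm]
  rw [hsplitmul] at step1
  simp only [Complex.add_re] at step1
  rw [step4] at h1
  linarith

lemma psd_smul_real {A : Matrix n n ℂ} (hA : A.PosSemidef) {r : ℝ} (hr : 0 ≤ r) :
    (((r : ℝ) : ℂ) • A).PosSemidef := by
  refine Matrix.PosSemidef.of_dotProduct_mulVec_nonneg ?_ ?_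
  · unfold Matrix.IsHermitian
    rw [conjTranspose_smul, hA.1.eq]
    congr 1
    simp
  · intro x
    rw [smul_mulVec, dotProduct_smul, smul_eq_mul]
    exact mul_nonneg (by simpa using (RCLike.ofReal_nonneg (K := ℂ)).mpr hr) (hA.dotProduct_mulVec_nonneg x)

lemma trSqrt_smul {A : Matrix n n ℂ} (hA : A.PosSemidef) {r : ℝ} (hr : 0 ≤ r) :
    trSqrt (((r : ℝ) : ℂ) • A) = Real.sqrt r * trSqrt A := by
  have hsm : (((r : ℝ) : ℂ) • A).PosSemidef := psd_smul_real hA hr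
  have hsq : ((Real.sqrt r : ℝ) : ℂ) • hA.sqrt = hsm.sqrt := by
    apply Matrix.PosSemidef.eq_sqrt_of_sq_eq (psd_smul_real hA.posSemidef_sqrt (Real.sqrt_nonneg r)) hsm
    rw [pow_two, smul_mul_smul_comm, hA.sqrt_mul_self, ← Complex.ofReal_mul,
      Real.mul_self_sqrt hr]
  rw [← sqrt_trace_re hsm, ← hsq, trace_smul]
  rw [smul_eq_mul]
  simp only [Complex.mul_re, Complex.ofReal_re, Complex.ofReal_im, zero_mul, sub_zero]
  rw [sqrt_trace_re hA]

/-- fidelity-type bound: trSqrt (√ω σ √ω) ≤ (tr σ + tr ω)/2 -/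
lemma trSqrt_conj_le {σ ω : Matrix n n ℂ} (hσ : σ.PosSemidef) (hω : ω.PosSemidef) :
    trSqrt (hω.sqrt * σ * hω.sqrt) ≤ (σ.trace.re + ω.trace.re) / 2 := by
  have hA' : (hω.sqrt * σ * hω.sqrt).PosSemidef := by
    have := hσ.mul_mul_conjTranspose_same hω.sqrt
    rwa [hω.posSemidef_sqrt.1.eq] at this
  have key : ∀ δ : ℝ, 0 < δ →
      trSqrt (hω.sqrt * σ * hω.sqrt) ≤ (σ.trace.re + ω.trace.re + (Fintype.card n) * δ) / 2 := by
    intro δ hδ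
    set g : ℝ → ℝ := fun x => max x 0 + δ with hgdef
    have hg : ∀ x, 0 < g x := fun x => add_pos_of_nonneg_of_pos (le_max_right x 0) hδ
    have h1 := amgm hA' hω.1 g hg
    set R := hω.1.cfc (fun x => (g x)⁻¹) with hRdef
    -- K = √ω R √ω = cfc (√x * (g x)⁻¹ * √x)
    have hWc : hω.sqrt = hω.1.cfc Real.sqrt := rfl
    have hK : hω.sqrt * R * hω.sqrt = hω.1.cfc (fun x => Real.sqrt x * (g x)⁻¹ * Real.sqrt x) := by
      rw [hWc, hRdef, myCfc_mul, myCfc_mul]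
    have hKle : (hω.1.cfc (fun x => 1 - Real.sqrt x * (g x)⁻¹ * Real.sqrt x)).PosSemidef := by
      refine myCfc_psd hω.1 _ (fun i => ?_)
      set x := hω.1.eigenvalues i with hx
      rcases le_or_gt x 0 with h | h
      · rw [Real.sqrt_eq_zero'.mpr h]
        norm_num
      · have hgx : g x = x + δ := by
          rw [hgdef]
          simp [max_eq_left h.le]
        have hss : Real.sqrt x * Real.sqrt x = x := Real.mul_self_sqrt h.le
        have hb : Real.sqrt x * (g x)⁻¹ * Real.sqrt x ≤ 1 := by
          rw [hgx, mul_comm, ← mul_assoc, hss, mul_inv_le_iff₀ (by linarith)]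
          linarith
        linarith
    -- trace manipulations
    have tcyc : ((hω.sqrt * σ * hω.sqrt) * R).trace = (σ * (hω.sqrt * R * hω.sqrt)).trace := by
      rw [show hω.sqrt * σ * hω.sqrt * R = hω.sqrt * (σ * (hω.sqrt * R)) by noncomm_ring,
        trace_mul_comm, show σ * (hω.sqrt * R) * hω.sqrt = σ * (hω.sqrt * R * hω.sqrt) by
          noncomm_ring]
    have hsub : σ * (1 - hω.sqrt * R * hω.sqrt)
        = σ - σ * (hω.sqrt * R * hω.sqrt) := by rw [mul_sub, mul_one]
    have hone : (1 : Matrix n n ℂ) - hω.sqrt * R * hω.sqrt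
        = hω.1.cfc (fun x => 1 - Real.sqrt x * (g x)⁻¹ * Real.sqrt x) := by
      rw [hK, ← myCfc_sub]
      congr 1
      rw [myCfc_const hω.1 1]
      simp
    have h4 := trace_mul_psd_re_nonneg hσ (hone ▸ hKle)
    rw [hsub, trace_sub] at h4
    simp only [Complex.sub_re] at h4
    -- sum of g over eigenvalues of ω
    have hsum : ∑ i, g (hω.1.eigenvalues i) = ω.trace.re + (Fintype.card n) * δ := by
      rw [hgdef]
      have : ∀ i, max (hω.1.eigenvalues i) 0 + δ = hω.1.eigenvalues i + δ := fun i => by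
        rw [max_eq_left (hω.eigenvalues_nonneg i)]
      simp only [this]
      rw [Finset.sum_add_distrib]
      congr 1
      · rw [herm_trace hω.1]
        simp
      · simp [mul_comm]
    rw [hsum] at h1
    rw [tcyc] at h1
    linarith
  refine le_of_forall_pos_le_add (fun e he => ?_)
  have hc1 : (0:ℝ) < (Fintype.card n : ℝ) + 1 := by positivity
  have hkey := key (2 * e / ((Fintype.card n : ℝ) + 1)) (by positivity)
  refine hkey.trans ?_
  have hbd : (Fintype.card n : ℝ) * (2 * e / ((Fintype.card n : ℝ) + 1)) ≤ 2 * e := by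
    rw [mul_div_assoc', div_le_iff₀ hc1]
    nlinarith [he.le]
  linarith


lemma sum_singularValues (X : Matrix n n ℂ) : ∑ i, singularValues X i = trSqrt (Xᴴ * X) := by
  rw [trSqrt_eq (Matrix.posSemidef_conjTranspose_mul_self X).1]
  rfl

lemma fidelity_eq' {σ ω : Matrix n n ℂ} (hσ : σ.PosSemidef) (hω : ω.PosSemidef) :
    fidelity σ ω = trSqrt (hω.sqrt * σ * hω.sqrt) := by
  unfold fidelity schattenNorm
  rw [if_neg (by norm_num : (1:ℝ≥0∞) ≠ ⊤)]
  simp only [ENNReal.toReal_one, Real.rpow_one, one_div_one, div_self, ne_eq, one_ne_zero,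
    not_false_eq_true]
  rw [sum_singularValues]
  congr 1
  unfold psdSqrt
  rw [dif_pos hσ, dif_pos hω]
  change (hσ.sqrt * hω.sqrt)ᴴ * (hσ.sqrt * hω.sqrt) = _
  rw [conjTranspose_mul, hσ.posSemidef_sqrt.1.eq, hω.posSemidef_sqrt.1.eq]
  calc hω.sqrt * hσ.sqrt * (hσ.sqrt * hω.sqrt)
      = hω.sqrt * (hσ.sqrt * hσ.sqrt) * hω.sqrt := by noncomm_ring
    _ = _ := by rw [hσ.sqrt_mul_self]

lemma cp_psd {a b : Type*} [Fintype a] [Fintype b] [DecidableEq a]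
    {Φ : Matrix a a ℂ → Matrix b b ℂ} (hΦ : IsCP Φ) {ρ : Matrix a a ℂ}
    (hρ : ρ.PosSemidef) : (Φ ρ).PosSemidef := by
  obtain ⟨s, K, hK⟩ := hΦ
  rw [hK]
  exact Finset.sum_induction _ _ (fun x y hx hy => hx.add hy) Matrix.PosSemidef.zero
    (fun i _ => hρ.mul_mul_conjTranspose_same (K i))

lemma real_endgame (F Fh ε : ℝ) (hF1 : F ≤ 1) (hF0 : 0 ≤ F) (hFh0 : 0 ≤ Fh)
    (hε0 : 0 < ε) (hε1 : ε < 1 / 2)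
    (hup : Fh ≤ Real.sqrt (1 + ε) * F + Real.sqrt ε)
    (hlo : Real.sqrt (1 - ε) * F ≤ Fh + Real.sqrt ε) :
    |Fh - F| ≤ 3 / Real.sqrt 2 * Real.sqrt ε := by
  set t := Real.sqrt ε with htdef
  have htpos : 0 < t := Real.sqrt_pos.mpr hε0
  have ht2 : t * t = ε := Real.mul_self_sqrt hε0.le
  have hs2 : Real.sqrt 2 * Real.sqrt 2 = 2 := Real.mul_self_sqrt (by norm_num)
  have hs2pos : 0 < Real.sqrt 2 := Real.sqrt_pos.mpr (by norm_num)
  have h1pe : Real.sqrt (1 + ε) ≤ 1 + ε / 2 := by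
    rw [show (1:ℝ) + ε / 2 = Real.sqrt ((1 + ε / 2) ^ 2) from (Real.sqrt_sq (by linarith)).symm]
    exact Real.sqrt_le_sqrt (by nlinarith)
  have h1me : 1 - ε ≤ Real.sqrt (1 - ε) := by
    have h' : Real.sqrt (1 - ε) * Real.sqrt (1 - ε) = 1 - ε :=
      Real.mul_self_sqrt (by linarith)
    nlinarith [Real.sqrt_nonneg (1 - ε)]
  have htle : t * Real.sqrt 2 ≤ 1 := by nlinarith
  have htε : ε ≤ t / Real.sqrt 2 := by
    rw [le_div_iff₀ hs2pos]
    nlinarith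
  have hup3 : Fh - F ≤ ε / 2 + t := by nlinarith [Real.sqrt_nonneg (1 + ε)]
  have hlo3 : F - Fh ≤ ε + t := by nlinarith
  rw [abs_sub_le_iff]
  constructor
  · have h5 : ε / 2 + t ≤ 3 / Real.sqrt 2 * t := by
      rw [div_mul_eq_mul_div, le_div_iff₀ hs2pos]
      nlinarith
    linarith
  · have h5 : ε + t ≤ 3 / Real.sqrt 2 * t := by
      rw [div_mul_eq_mul_div, le_div_iff₀ hs2pos]
      nlinarith
    linarith


end AuxLemmas

/-- output-fidelity approximation from the two-sided Loewner bound. -/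
theorem stmt16 (a b : ℕ)
    (N Nh : Matrix (Fin a) (Fin a) ℂ → Matrix (Fin b) (Fin b) ℂ)
    (hN : IsCPTP N) (hNh : IsCP Nh)
    (ε : ℝ) (hε0 : 0 < ε) (hε1 : ε < 1 / 2)
    (happrox : ∀ ρ : Matrix (Fin a) (Fin a) ℂ, IsDensity ρ →
      loewnerLE (((1 - ε : ℝ) : ℂ) • N ρ - ((ε : ℂ) / b) • 1) (Nh ρ) ∧
      loewnerLE (Nh ρ) (((1 + ε : ℝ) : ℂ) • N ρ + ((ε : ℂ) / b) • 1)) :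
    ∀ ρ : Matrix (Fin a) (Fin a) ℂ, IsDensity ρ →
      ∀ ω : Matrix (Fin b) (Fin b) ℂ, IsDensity ω →
        |fidelity (Nh ρ) ω - fidelity (N ρ) ω| ≤ (3 / Real.sqrt 2) * Real.sqrt ε := by
  intro ρ hρ ω hω
  have hbpos : 0 < b := by
    rcases Nat.eq_zero_or_pos b with hb | hb
    · exfalso
      have htr := hω.2
      subst hb
      rw [Matrix.trace] at htr
      simp at htr
    · exact hb
  have hbR : (0:ℝ) < (b:ℝ) := by exact_mod_cast hbpos
  set σ := N ρ with hσdef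
  set σh := Nh ρ with hσhdef
  have hσpsd : σ.PosSemidef := cp_psd hN.1 hρ.1
  have hσhpsd : σh.PosSemidef := cp_psd hNh hρ.1
  have hσtr : σ.trace = 1 := by rw [hσdef, hN.2 ρ, hρ.2]
  set W := hω.1.sqrt with hWdef
  have hWh : Wᴴ = W := hω.1.posSemidef_sqrt.1
  set M := W * σ * W with hMdef
  set Mh := W * σh * W with hMhdef
  have hMpsd : M.PosSemidef := by
    have := hσpsd.mul_mul_conjTranspose_same W
    rwa [hWh] at this
  have hMhpsd : Mh.PosSemidef := by
    have := hσhpsd.mul_mul_conjTranspose_same W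
    rwa [hWh] at this
  set Q : Matrix (Fin b) (Fin b) ℂ := ((ε : ℂ) / b) • ω with hQdef
  have hQeq : Q = (((ε / b : ℝ)) : ℂ) • ω := by
    rw [hQdef]
    norm_cast
  have hQpsd : Q.PosSemidef := by
    rw [hQeq]
    exact psd_smul_real hω.1 (by positivity)
  have hQtr : Q.trace.re = ε / b := by
    rw [hQeq, trace_smul, hω.2, smul_eq_mul, mul_one]
    simp
  obtain ⟨hlow, hupp⟩ := happrox ρ hρ
  have hub : (((1 + ε : ℝ) : ℂ) • M + Q - Mh).PosSemidef := by
    have h2 := hupp.mul_mul_conjTranspose_same W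
    rw [hWh] at h2
    have heq : W * ((((1 + ε : ℝ) : ℂ) • σ + ((ε : ℂ) / b) • 1) - σh) * W
        = ((1 + ε : ℝ) : ℂ) • M + Q - Mh := by
      rw [hMdef, hMhdef, hQdef]
      simp only [mul_sub, sub_mul, mul_add, add_mul, mul_smul_comm, smul_mul_assoc, mul_one]
      rw [hWdef, hω.1.sqrt_mul_self]
    rw [← heq]
    exact h2
  have hlb : (Mh + Q - ((1 - ε : ℝ) : ℂ) • M).PosSemidef := by
    have h2 := hlow.mul_mul_conjTranspose_same W
    rw [hWh] at h2
    have heq : W * (σh - ((((1 - ε : ℝ) : ℂ) • σ) - ((ε : ℂ) / b) • 1)) * W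
        = Mh + Q - ((1 - ε : ℝ) : ℂ) • M := by
      rw [hMdef, hMhdef, hQdef]
      simp only [mul_sub, sub_mul, mul_add, add_mul, mul_smul_comm, smul_mul_assoc, mul_one]
      rw [hWdef, hω.1.sqrt_mul_self]
      abel
    rw [← heq]
    exact h2
  set c : ℝ := Real.sqrt ε / b with hcdef
  have htpos : 0 < Real.sqrt ε := Real.sqrt_pos.mpr hε0
  have hcpos : 0 < c := by positivity
  have he1 : Q.trace.re / c = Real.sqrt ε := by
    rw [hQtr, hcdef, div_div_div_cancel_right₀, Real.div_sqrt]
    exact hbR.ne'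
  have he2 : ((Fintype.card (Fin b)) : ℝ) * c = Real.sqrt ε := by
    rw [Fintype.card_fin, hcdef]
    field_simp
  have hup2 := main_bound hMhpsd hMpsd hQpsd (1 + ε) c (by linarith) hcpos hub
  rw [he1, he2] at hup2
  have hlb' : (((1:ℝ):ℂ) • Mh + Q - ((1 - ε : ℝ) : ℂ) • M).PosSemidef := by
    rw [Complex.ofReal_one, one_smul]
    exact hlb
  have hlo2 := main_bound (psd_smul_real hMpsd (by linarith)) hMhpsd hQpsd 1 c
    (by norm_num) hcpos hlb'
  rw [he1, he2, Real.sqrt_one, one_mul, trSqrt_smul hMpsd (by linarith : (0:ℝ) ≤ 1 - ε)] at hlo2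
  have hF1 : trSqrt M ≤ 1 := by
    have h3 := trSqrt_conj_le hσpsd hω.1
    simp only [hσtr, hω.2, Complex.one_re] at h3
    have h4 : trSqrt (hω.1.sqrt * σ * hω.1.sqrt) ≤ 1 := by linarith
    exact h4
  have hF0 : 0 ≤ trSqrt M := trSqrt_nonneg _
  have hFh0 : 0 ≤ trSqrt Mh := trSqrt_nonneg _
  have hFid1 : fidelity (Nh ρ) ω = trSqrt Mh := fidelity_eq' hσhpsd hω.1
  have hFid2 : fidelity (N ρ) ω = trSqrt M := fidelity_eq' hσpsd hω.1
  rw [hFid1, hFid2]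
  have hhalf : (Real.sqrt ε + Real.sqrt ε) / 2 = Real.sqrt ε := by ring
  rw [hhalf] at hup2 hlo2
  exact real_endgame (trSqrt M) (trSqrt Mh) ε hF1 hF0 hFh0 hε0 hε1 hup2 hlo2

end
end
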